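/- arXiv:2205.08509 — 3 statements merged into one kernel-verified Lean document; each statement's English description precedes it below -/
import Mathlib

section
/- For every a > 0 and every s > 0, the Laplace transform of the function t ↦ E[exp(−a E_t)] exists and is given by ∫_0^∞ e^{−st} E[exp(−a E_t)] dt = φ(s) / (s (φ(s) + a)). -/
open MeasureTheory Filter Set
open Topology

lemma aux_comp_meas {α β : Type*} [MeasurableSpace α] [MeasurableSpace β]
    {g : α → ℝ} (hg : Measurable g) {S : Set ℝ} (hS : S.Countable)
    (hrange : ∀ x, g x ∈ S) {F : ℝ → β → ℝ} (hF : ∀ c, Measurable (F c)) :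
    Measurable (fun p : α × β => F (g p.1) p.2) := by
  intro B hB
  have h : (fun p : α × β => F (g p.1) p.2) ⁻¹' B
      = ⋃ c ∈ S, ((fun p : α × β => g p.1) ⁻¹' {c}) ∩ ((fun p : α × β => F c p.2) ⁻¹' B) := by
    ext p
    simp only [mem_preimage, mem_iUnion, mem_inter_iff, mem_singleton_iff]
    constructor
    · intro h; exact ⟨g p.1, hrange p.1, rfl, h⟩
    · rintro ⟨c, hc, hgc, h⟩; rwa [hgc]
  rw [h]
  exact MeasurableSet.biUnion hS fun c _ =>
    ((hg.comp measurable_fst) (measurableSet_singleton c)).inter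
      (((hF c).comp measurable_snd) hB)

lemma aux_exp_Ioi {b : ℝ} (hb : 0 < b) (c : ℝ) :
    ∫ x in Ioi c, Real.exp (-b * x) = Real.exp (-b * c) / b := by
  have h := integral_comp_mul_left_Ioi (fun x => Real.exp (-x)) c hb
  simp only [← neg_mul] at h
  rw [integral_exp_neg_Ioi] at h
  rw [show (fun x => Real.exp (-b * x)) = fun x => Real.exp (-(b * x)) by ext x; ring_nf] at h
  simp only [neg_mul] at h ⊢
  rw [h, smul_eq_mul]
  ring

lemma aux_exp_Ioo {s : ℝ} (hs : 0 < s) {d : ℝ} (hd : 0 ≤ d) :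
    ∫ t in Ioo 0 d, Real.exp (-s * t) = (1 - Real.exp (-s * d)) / s := by
  have hD : ∀ x : ℝ, HasDerivAt (fun y : ℝ => Real.exp (-s * y) / (-s)) (Real.exp (-s * x)) x := by
    intro x
    have h1 : HasDerivAt (fun y : ℝ => -s * y) (-s) x := by
      simpa using (hasDerivAt_id x).const_mul (-s)
    have h2 := (Real.hasDerivAt_exp (-s * x)).comp x h1
    have h3 := h2.div_const (-s)
    have hse : s / s = 1 := div_self hs.ne'
    simpa [mul_div_assoc, hse] using h3
  rw [← integral_Ioc_eq_integral_Ioo, ← intervalIntegral.integral_of_le hd]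
  rw [intervalIntegral.integral_eq_sub_of_hasDerivAt (fun x _ => hD x)
    ((Real.continuous_exp.comp (continuous_const.mul continuous_id)).intervalIntegrable 0 d)]
  have hse : s ≠ 0 := hs.ne'
  field_simp
  have h2 : (Real.exp (-(s * d)) / -s - 1 / -s) * s
      = (1 - Real.exp (-(s * d))) * (s * s⁻¹) := by ring
  rw [mul_zero, neg_zero, Real.exp_zero]; ring

noncomputable def auxR (n : ℕ) (u : ℝ) : ℝ := (⌈u * 2 ^ n⌉ : ℤ) / 2 ^ n

lemma auxR_meas (n : ℕ) : Measurable (auxR n) := by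
  unfold auxR
  have h1 : Measurable fun u : ℝ => (⌈u * 2 ^ n⌉ : ℤ) := (measurable_id.mul_const _).ceil
  exact ((measurable_from_top).comp h1 : Measurable fun u : ℝ => ((⌈u * 2 ^ n⌉ : ℤ) : ℝ)).div_const _

lemma auxR_mem_range (n : ℕ) (u : ℝ) :
    auxR n u ∈ Set.range (fun k : ℤ => (k : ℝ) / 2 ^ n) := ⟨⌈u * 2 ^ n⌉, rfl⟩

lemma auxR_le (n : ℕ) (u : ℝ) : u ≤ auxR n u := by
  have h2 : (0:ℝ) < 2 ^ n := by positivity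
  rw [auxR, le_div_iff₀ h2]
  exact Int.le_ceil _

lemma auxR_lt (n : ℕ) (u : ℝ) : auxR n u < u + ((2:ℝ) ^ n)⁻¹ := by
  have h2 : (0:ℝ) < 2 ^ n := by positivity
  rw [auxR, div_lt_iff₀ h2]
  have := Int.ceil_lt_add_one (u * 2 ^ n)
  calc ((⌈u * 2 ^ n⌉ : ℤ) : ℝ) < u * 2 ^ n + 1 := this
    _ = (u + ((2:ℝ) ^ n)⁻¹) * 2 ^ n := by field_simp
  
lemma auxR_anti (n : ℕ) (u : ℝ) : auxR (n + 1) u ≤ auxR n u := by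
  have h2 : (0:ℝ) < 2 ^ (n+1) := by positivity
  rw [auxR, auxR, div_le_div_iff₀ h2 (by positivity)]
  have hc0 : u * 2 ^ (n+1) ≤ ((2 * ⌈u * 2 ^ n⌉ : ℤ) : ℝ) := by
    push_cast
    rw [pow_succ]
    nlinarith [Int.le_ceil (u * 2 ^ n)]
  have hc : ((⌈u * 2 ^ (n+1)⌉ : ℤ) : ℝ) ≤ ((2 * ⌈u * 2 ^ n⌉ : ℤ) : ℝ) := by
    exact_mod_cast Int.ceil_le.mpr (by exact_mod_cast hc0)
  calc ((⌈u * 2 ^ (n+1)⌉ : ℤ) : ℝ) * 2 ^ n ≤ ((2 * ⌈u * 2 ^ n⌉ : ℤ) : ℝ) * 2 ^ n :=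
        mul_le_mul_of_nonneg_right hc (by positivity)
    _ = ((⌈u * 2 ^ n⌉ : ℤ) : ℝ) * 2 ^ (n+1) := by push_cast; ring

lemma auxR_tendsto (u : ℝ) : Tendsto (fun n => auxR n u) atTop (𝓝 u) := by
  have h1 : Tendsto (fun n : ℕ => u + ((2:ℝ) ^ n)⁻¹) atTop (𝓝 (u + 0)) := by
    exact tendsto_const_nhds.add
      ((tendsto_pow_atTop_atTop_of_one_lt (one_lt_two (α := ℝ))).inv_tendsto_atTop)
  rw [add_zero] at h1
  exact tendsto_of_tendsto_of_tendsto_of_le_of_le tendsto_const_nhds h1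
    (fun n => auxR_le n u) (fun n => (auxR_lt n u).le)

set_option maxHeartbeats 2000000 in
/-- Double Laplace transform of an inverse subordinator:
for `a > 0`, `s > 0`, the Laplace transform of `t ↦ E[exp(-a E_t)]` exists and equals
`φ(s) / (s (φ(s) + a))`. -/
theorem stmt_0
    {Ω : Type*} [MeasurableSpace Ω] (P : Measure Ω) [IsProbabilityMeasure P]
    (D : ℝ → Ω → ℝ) (φ : ℝ → ℝ) (E : ℝ → Ω → ℝ)
    (hDmeas : ∀ u : ℝ, Measurable (D u))
    (hDnonneg : ∀ u ω, 0 ≤ D u ω)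
    (hD0 : ∀ᵐ ω ∂P, D 0 ω = 0)
    (hDpath : ∀ᵐ ω ∂P,
      (∀ u : ℝ, 0 ≤ u → ContinuousWithinAt (fun v => D v ω) (Set.Ici u) u) ∧
      StrictMonoOn (fun u => D u ω) (Set.Ici (0 : ℝ)) ∧
      (∀ M : ℝ, ∃ u : ℝ, 0 ≤ u ∧ M < D u ω))
    (hφpos : ∀ l : ℝ, 0 < l → 0 < φ l)
    (hφmono : StrictMonoOn φ (Set.Ioi (0 : ℝ)))
    (hφ0 : Tendsto φ (nhdsWithin 0 (Set.Ioi 0)) (nhds 0))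
    (hφtop : Tendsto φ atTop atTop)
    (hLap : ∀ u : ℝ, 0 ≤ u → ∀ l : ℝ, 0 < l →
      ∫ ω, Real.exp (-l * D u ω) ∂P = Real.exp (-u * φ l))
    (hE : ∀ t ω, E t ω = sInf {u : ℝ | 0 < u ∧ t < D u ω})
    (hEmeas : ∀ t : ℝ, Measurable (E t))
    (a s : ℝ) (ha : 0 < a) (hs : 0 < s) :
    IntegrableOn (fun t => Real.exp (-s * t) * ∫ ω, Real.exp (-a * E t ω) ∂P)
      (Set.Ioi (0 : ℝ)) ∧
    ∫ t in Set.Ioi (0 : ℝ), Real.exp (-s * t) * ∫ ω, Real.exp (-a * E t ω) ∂P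
      = φ s / (s * (φ s + a)) := by
  
  classical
  have hsne : s ≠ 0 := hs.ne'
  have hφs : 0 < φ s := hφpos s hs
  -- the jointly measurable modification of D
  set D' : ℝ × Ω → ℝ := fun p => ⨅ n : ℕ, D (auxR n p.1) p.2 with hD'def
  have hD'meas : Measurable D' := by
    apply Measurable.iInf
    intro n
    exact aux_comp_meas (auxR_meas n) (Set.countable_range _) (auxR_mem_range n) hDmeas
  have hD'nonneg : ∀ p, 0 ≤ D' p := fun p => Real.iInf_nonneg fun n => hDnonneg _ _
  -- D' agrees with D on nonneg times for good paths
  have hD'eq : ∀ ω, (∀ u : ℝ, 0 ≤ u → ContinuousWithinAt (fun v => D v ω) (Set.Ici u) u) →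
      StrictMonoOn (fun u => D u ω) (Set.Ici (0 : ℝ)) →
      ∀ u : ℝ, 0 ≤ u → D' (u, ω) = D u ω := by
    intro ω hrc hmono u hu
    have hmem : ∀ n, auxR n u ∈ Set.Ici (0:ℝ) := fun n => le_trans hu (auxR_le n u)
    have hanti : Antitone fun n => D (auxR n u) ω := by
      apply antitone_nat_of_succ_le
      intro n
      rcases eq_or_lt_of_le (auxR_anti n u) with h | h
      · rw [h]
      · exact (hmono.monotoneOn (hmem (n+1)) (hmem n) (auxR_anti n u) : _)
    have hbdd : BddBelow (Set.range fun n => D (auxR n u) ω) := by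
      refine ⟨D u ω, ?_⟩
      rintro x ⟨n, rfl⟩
      show D u ω ≤ D (auxR n u) ω
      rcases eq_or_lt_of_le (auxR_le n u) with h | h
      · rw [← h]
      · exact (hmono (Set.mem_Ici.mpr hu) (hmem n) h).le
    have h1 : Tendsto (fun n => D (auxR n u) ω) atTop (𝓝 (⨅ n, D (auxR n u) ω)) :=
      tendsto_atTop_ciInf hanti hbdd
    have h2 : Tendsto (fun n => D (auxR n u) ω) atTop (𝓝 (D u ω)) := by
      apply (hrc u hu).tendsto.comp
      apply tendsto_nhdsWithin_of_tendsto_nhds_of_eventually_within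
      · exact auxR_tendsto u
      · exact Eventually.of_forall fun n => auxR_le n u
    exact tendsto_nhds_unique h1 h2
  -- basic facts about E
  have hEnonneg : ∀ t ω, 0 ≤ E t ω := by
    intro t ω
    rw [hE]
    exact Real.sInf_nonneg fun u hu => hu.1.le
  have hSbdd : ∀ t ω, BddBelow {u : ℝ | 0 < u ∧ t < D u ω} :=
    fun t ω => ⟨0, fun u hu => hu.1.le⟩
  have hSne : ∀ ω, D 0 ω = 0 → (∀ M : ℝ, ∃ u : ℝ, 0 ≤ u ∧ M < D u ω) →
      ∀ t : ℝ, {u : ℝ | 0 < u ∧ t < D u ω}.Nonempty := by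
    intro ω h0 hunb t
    obtain ⟨u, hu0, hu⟩ := hunb (max t 0)
    have hune : u ≠ 0 := by
      rintro rfl
      rw [h0] at hu
      exact absurd hu (not_lt.mpr (le_max_right t 0))
    exact ⟨u, lt_of_le_of_ne hu0 (Ne.symm hune), lt_of_le_of_lt (le_max_left t 0) hu⟩
  have hElt : ∀ ω, StrictMonoOn (fun u => D u ω) (Set.Ici (0 : ℝ)) →
      ∀ t : ℝ, {u : ℝ | 0 < u ∧ t < D u ω}.Nonempty →
      ∀ u : ℝ, E t ω < u → 0 < u ∧ t < D u ω := by
    intro ω hmono t hne u hu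
    rw [hE] at hu
    obtain ⟨v, hv, hvu⟩ := (csInf_lt_iff (hSbdd t ω) hne).mp hu
    have hu0 : 0 < u := hv.1.trans hvu
    exact ⟨hu0, hv.2.trans (hmono hv.1.le hu0.le hvu)⟩
  have hEle : ∀ t u ω, 0 < u → t < D u ω → E t ω ≤ u := by
    intro t u ω hu ht
    rw [hE]
    exact csInf_le (hSbdd t ω) ⟨hu, ht⟩
  -- the key u-integral identity, pointwise in good ω
  have factC : ∀ ω, StrictMonoOn (fun u => D u ω) (Set.Ici (0 : ℝ)) →
      (∀ t : ℝ, {u : ℝ | 0 < u ∧ t < D u ω}.Nonempty) → ∀ t : ℝ,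
      ∫ u in Set.Ioi (0:ℝ), (if t < D u ω then Real.exp (-a * u) else 0)
        = Real.exp (-a * E t ω) / a := by
    intro ω hmono hne t
    have he0 : 0 ≤ E t ω := hEnonneg t ω
    have hae : (fun u => if t < D u ω then Real.exp (-a * u) else 0)
        =ᵐ[volume.restrict (Set.Ioi (0:ℝ))]
        (Set.Ioi (E t ω)).indicator (fun u => Real.exp (-a * u)) := by
      rw [EventuallyEq, ae_restrict_iff' measurableSet_Ioi]
      have h2 : ∀ᵐ u ∂(volume : Measure ℝ), u ≠ E t ω := by
        rw [ae_iff]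
        simpa [not_not] using measure_singleton (μ := (volume : Measure ℝ)) (E t ω)
      filter_upwards [h2] with u hue hu0
      by_cases h : E t ω < u
      · rw [if_pos (hElt ω hmono t (hne t) u h).2, Set.indicator_of_mem (Set.mem_Ioi.mpr h)]
      · have h' : u < E t ω := lt_of_le_of_ne (not_lt.mp h) hue
        rw [Set.indicator_of_notMem (by simp [Set.mem_Ioi]; exact h'.le), if_neg]
        intro hcon
        exact absurd (hEle t u ω hu0 hcon) (not_le.mpr h')
    calc ∫ u in Set.Ioi (0:ℝ), (if t < D u ω then Real.exp (-a * u) else 0)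
        = ∫ u in Set.Ioi (0:ℝ), (Set.Ioi (E t ω)).indicator (fun u => Real.exp (-a * u)) u :=
          integral_congr_ae hae
      _ = ∫ u in Set.Ioi (0:ℝ) ∩ Set.Ioi (E t ω), Real.exp (-a * u) :=
          setIntegral_indicator measurableSet_Ioi
      _ = ∫ u in Set.Ioi (E t ω), Real.exp (-a * u) := by
          rw [Set.Ioi_inter_Ioi, max_eq_right he0]
      _ = Real.exp (-a * E t ω) / a := aux_exp_Ioi ha _
  -- the key t-integral identity
  have factD : ∀ d : ℝ, 0 ≤ d →
      ∫ t in Set.Ioi (0:ℝ), (if t < d then Real.exp (-s * t) else 0)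
        = (1 - Real.exp (-s * d)) / s := by
    intro d hd
    have h1 : ∀ t : ℝ, (if t < d then Real.exp (-s * t) else 0)
        = (Set.Iio d).indicator (fun t => Real.exp (-s * t)) t := by
      intro t
      simp [Set.indicator_apply]
    simp_rw [h1]
    rw [setIntegral_indicator measurableSet_Iio, Set.Ioi_inter_Iio]
    exact aux_exp_Ioo hs hd
  -- K and its properties
  set K : ℝ → Ω → ℝ :=
    fun t ω => ∫ u in Set.Ioi (0:ℝ), (if t < D' (u, ω) then Real.exp (-a * u) else 0)
    with hKdef
  have hfmeas : Measurable (fun q : (ℝ × Ω) × ℝ =>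
      if q.1.1 < D' (q.2, q.1.2) then Real.exp (-a * q.2) else 0) := by
    apply Measurable.ite
    · exact measurableSet_lt (measurable_fst.fst)
        (hD'meas.comp (measurable_snd.prodMk measurable_fst.snd))
    · exact Real.measurable_exp.comp (measurable_snd.const_mul (-a))
    · exact measurable_const
  have hKsm : StronglyMeasurable (fun p : ℝ × Ω => K p.1 p.2) := by
    apply MeasureTheory.StronglyMeasurable.integral_prod_right'
      (f := fun q : (ℝ × Ω) × ℝ => if q.1.1 < D' (q.2, q.1.2) then Real.exp (-a * q.2) else 0)
    exact hfmeas.stronglyMeasurable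
  have hitemeas : ∀ (t : ℝ) (ω : Ω),
      Measurable (fun u => if t < D' (u, ω) then Real.exp (-a * u) else 0) := by
    intro t ω
    have hm : Measurable fun u : ℝ => ((t, ω), u) := measurable_const.prodMk measurable_id
    simpa [Function.comp_def] using hfmeas.comp hm
  have hite_le : ∀ (t : ℝ) (ω : Ω) (u : ℝ),
      (if t < D' (u, ω) then Real.exp (-a * u) else 0) ≤ Real.exp (-a * u) := by
    intro t ω u
    split_ifs
    · exact le_rfl
    · exact (Real.exp_pos _).le
  have hite_nonneg : ∀ (t : ℝ) (ω : Ω) (u : ℝ),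
      0 ≤ (if t < D' (u, ω) then Real.exp (-a * u) else 0) := by
    intro t ω u
    split_ifs
    · exact (Real.exp_pos _).le
    · exact le_rfl
  have hite_int : ∀ (t : ℝ) (ω : Ω),
      IntegrableOn (fun u => if t < D' (u, ω) then Real.exp (-a * u) else 0)
        (Set.Ioi (0:ℝ)) := by
    intro t ω
    apply Integrable.mono' (exp_neg_integrableOn_Ioi 0 ha)
      (hitemeas t ω).aestronglyMeasurable
    filter_upwards with u
    rw [Real.norm_eq_abs, abs_of_nonneg (hite_nonneg t ω u)]
    exact hite_le t ω u
  have hexpa_int : IntegrableOn (fun u : ℝ => Real.exp (-a * u)) (Set.Ioi (0:ℝ)) :=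
    exp_neg_integrableOn_Ioi 0 ha
  have hexpa_val : ∫ u in Set.Ioi (0:ℝ), Real.exp (-a * u) = a⁻¹ := by
    rw [aux_exp_Ioi ha 0]
    simp [one_div]
  have hKnonneg : ∀ t ω, 0 ≤ K t ω := by
    intro t ω
    exact integral_nonneg fun u => hite_nonneg t ω u
  have hKle : ∀ t ω, K t ω ≤ a⁻¹ := by
    intro t ω
    rw [← hexpa_val]
    exact integral_mono (hite_int t ω) hexpa_int (hite_le t ω)
  -- Step 1: pointwise in t
  have step1 : ∀ t : ℝ, ∫ ω, Real.exp (-a * E t ω) ∂P = a * ∫ ω, K t ω ∂P := by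
    intro t
    have h1 : ∀ᵐ ω ∂P, Real.exp (-a * E t ω) = a * K t ω := by
      filter_upwards [hD0, hDpath] with ω h0 hp
      have hKeq : K t ω = Real.exp (-a * E t ω) / a := by
        simp only [hKdef]
        have heq : ∀ u ∈ Set.Ioi (0:ℝ),
            (if t < D' (u, ω) then Real.exp (-a * u) else 0)
              = (if t < D u ω then Real.exp (-a * u) else 0) := by
          intro u hu
          rw [hD'eq ω hp.1 hp.2.1 u (le_of_lt hu)]
        rw [setIntegral_congr_fun measurableSet_Ioi heq]
        exact factC ω hp.2.1 (hSne ω h0 hp.2.2) t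
      rw [hKeq]
      field_simp
    rw [integral_congr_ae h1, integral_const_mul]
  -- integrability of uncurried integrand for the (t, ω) Fubini
  have hGint : Integrable (Function.uncurry fun t ω => Real.exp (-s * t) * K t ω)
      ((volume.restrict (Set.Ioi (0:ℝ))).prod P) := by
    apply Integrable.mono' (g := fun p : ℝ × Ω => Real.exp (-s * p.1) * a⁻¹)
      ((exp_neg_integrableOn_Ioi 0 hs).mul_prod (integrable_const a⁻¹))
    · exact ((Real.measurable_exp.comp
        (measurable_fst.const_mul (-s))).stronglyMeasurable.mul hKsm).aestronglyMeasurable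
    · filter_upwards with p
      rw [Function.uncurry, Real.norm_eq_abs, abs_mul, abs_of_pos (Real.exp_pos _),
        abs_of_nonneg (hKnonneg p.1 p.2)]
      exact mul_le_mul_of_nonneg_left (hKle p.1 p.2) (Real.exp_pos _).le
  have step3 := MeasureTheory.integral_integral_swap hGint
  -- L and its properties
  set L : Ω → ℝ :=
    fun ω => ∫ u in Set.Ioi (0:ℝ), Real.exp (-a * u) * Real.exp (-s * D' (u, ω)) with hLdef
  have hf3meas : Measurable (fun q : Ω × ℝ =>
      Real.exp (-a * q.2) * Real.exp (-s * D' (q.2, q.1))) := by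
    apply Measurable.mul
    · exact Real.measurable_exp.comp (measurable_snd.const_mul (-a))
    · exact Real.measurable_exp.comp
        ((hD'meas.comp (measurable_snd.prodMk measurable_fst)).const_mul (-s))
  have hf3u_meas : ∀ ω, Measurable (fun u : ℝ =>
      Real.exp (-a * u) * Real.exp (-s * D' (u, ω))) := by
    intro ω
    have hm : Measurable fun u : ℝ => (ω, u) := measurable_const.prodMk measurable_id
    simpa [Function.comp_def] using hf3meas.comp hm
  have hf3_le : ∀ (ω : Ω) (u : ℝ),
      Real.exp (-a * u) * Real.exp (-s * D' (u, ω)) ≤ Real.exp (-a * u) := by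
    intro ω u
    have h1 : Real.exp (-s * D' (u, ω)) ≤ 1 := by
      apply Real.exp_le_one_iff.mpr
      have := hD'nonneg (u, ω)
      nlinarith
    nlinarith [Real.exp_pos (-a * u), Real.exp_pos (-s * D' (u, ω))]
  have hf3_nonneg : ∀ (ω : Ω) (u : ℝ),
      0 ≤ Real.exp (-a * u) * Real.exp (-s * D' (u, ω)) := by
    intro ω u
    positivity
  have hf3_int : ∀ ω, IntegrableOn (fun u : ℝ =>
      Real.exp (-a * u) * Real.exp (-s * D' (u, ω))) (Set.Ioi (0:ℝ)) := by
    intro ω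
    apply Integrable.mono' hexpa_int (hf3u_meas ω).aestronglyMeasurable
    filter_upwards with u
    rw [Real.norm_eq_abs, abs_of_nonneg (hf3_nonneg ω u)]
    exact hf3_le ω u
  have hLnonneg : ∀ ω, 0 ≤ L ω := fun ω => integral_nonneg fun u => hf3_nonneg ω u
  have hLle : ∀ ω, L ω ≤ a⁻¹ := by
    intro ω
    rw [← hexpa_val]
    exact integral_mono (hf3_int ω) hexpa_int (hf3_le ω)
  have hLsm : StronglyMeasurable L := by
    apply MeasureTheory.StronglyMeasurable.integral_prod_right'
      (f := fun q : Ω × ℝ => Real.exp (-a * q.2) * Real.exp (-s * D' (q.2, q.1)))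
    exact hf3meas.stronglyMeasurable
  have hLint : Integrable L P := by
    apply Integrable.mono' (integrable_const a⁻¹) hLsm.aestronglyMeasurable
    filter_upwards with ω
    rw [Real.norm_eq_abs, abs_of_nonneg (hLnonneg ω)]
    exact hLle ω
  -- Step 4: per-ω inner t-integral
  have step4 : ∀ ω : Ω,
      ∫ t in Set.Ioi (0:ℝ), Real.exp (-s * t) * K t ω = a⁻¹ * s⁻¹ - s⁻¹ * L ω := by
    intro ω
    have hint2 : Integrable (Function.uncurry fun t u : ℝ =>
        Real.exp (-s * t) * (if t < D' (u, ω) then Real.exp (-a * u) else 0))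
        ((volume.restrict (Set.Ioi (0:ℝ))).prod (volume.restrict (Set.Ioi (0:ℝ)))) := by
      apply Integrable.mono' (g := fun p : ℝ × ℝ => Real.exp (-s * p.1) * Real.exp (-a * p.2))
        ((exp_neg_integrableOn_Ioi 0 hs).mul_prod (exp_neg_integrableOn_Ioi 0 ha))
      · apply Measurable.aestronglyMeasurable
        apply Measurable.mul
        · exact Real.measurable_exp.comp (measurable_fst.const_mul (-s))
        · apply Measurable.ite
          · exact measurableSet_lt measurable_fst
              (hD'meas.comp (measurable_snd.prodMk measurable_const))
          · exact Real.measurable_exp.comp (measurable_snd.const_mul (-a))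
          · exact measurable_const
      · filter_upwards with p
        rw [Function.uncurry, Real.norm_eq_abs, abs_mul, abs_of_pos (Real.exp_pos _),
          abs_of_nonneg (hite_nonneg p.1 ω p.2)]
        exact mul_le_mul_of_nonneg_left (hite_le p.1 ω p.2) (Real.exp_pos _).le
    have hswap := MeasureTheory.integral_integral_swap hint2
    have hlhs : ∀ t : ℝ,
        ∫ u in Set.Ioi (0:ℝ),
          Real.exp (-s * t) * (if t < D' (u, ω) then Real.exp (-a * u) else 0)
          = Real.exp (-s * t) * K t ω := by
      intro t
      rw [integral_const_mul]
    have hrhs : ∀ u ∈ Set.Ioi (0:ℝ),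
        (∫ t in Set.Ioi (0:ℝ),
          Real.exp (-s * t) * (if t < D' (u, ω) then Real.exp (-a * u) else 0))
          = Real.exp (-a * u) * s⁻¹
            - s⁻¹ * (Real.exp (-a * u) * Real.exp (-s * D' (u, ω))) := by
      intro u _
      have h1 : ∀ t : ℝ,
          Real.exp (-s * t) * (if t < D' (u, ω) then Real.exp (-a * u) else 0)
            = Real.exp (-a * u) * (if t < D' (u, ω) then Real.exp (-s * t) else 0) := by
        intro t
        split_ifs
        · ring
        · ring
      simp_rw [h1]
      rw [integral_const_mul, factD (D' (u, ω)) (hD'nonneg (u, ω))]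
      field_simp
    calc ∫ t in Set.Ioi (0:ℝ), Real.exp (-s * t) * K t ω
        = ∫ t in Set.Ioi (0:ℝ), ∫ u in Set.Ioi (0:ℝ),
            Real.exp (-s * t) * (if t < D' (u, ω) then Real.exp (-a * u) else 0) := by
          apply setIntegral_congr_fun measurableSet_Ioi
          intro t _
          beta_reduce
          exact (hlhs t).symm
      _ = ∫ u in Set.Ioi (0:ℝ), ∫ t in Set.Ioi (0:ℝ),
            Real.exp (-s * t) * (if t < D' (u, ω) then Real.exp (-a * u) else 0) := hswap
      _ = ∫ u in Set.Ioi (0:ℝ), (Real.exp (-a * u) * s⁻¹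
            - s⁻¹ * (Real.exp (-a * u) * Real.exp (-s * D' (u, ω)))) :=
          setIntegral_congr_fun measurableSet_Ioi hrhs
      _ = (∫ u in Set.Ioi (0:ℝ), Real.exp (-a * u) * s⁻¹)
            - ∫ u in Set.Ioi (0:ℝ), s⁻¹ * (Real.exp (-a * u) * Real.exp (-s * D' (u, ω))) := by
          apply integral_sub (hexpa_int.mul_const s⁻¹) ((hf3_int ω).const_mul s⁻¹)
      _ = a⁻¹ * s⁻¹ - s⁻¹ * L ω := by
          rw [integral_mul_const, integral_const_mul, hexpa_val, hLdef]
  -- Step 6: Fubini in (ω, u)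
  have step6 : ∫ ω, L ω ∂P = (a + φ s)⁻¹ := by
    have hint3 : Integrable (Function.uncurry fun (ω : Ω) (u : ℝ) =>
        Real.exp (-a * u) * Real.exp (-s * D' (u, ω)))
        (P.prod (volume.restrict (Set.Ioi (0:ℝ)))) := by
      apply Integrable.mono' (g := fun p : Ω × ℝ => (1:ℝ) * Real.exp (-a * p.2))
        ((integrable_const (1:ℝ)).mul_prod (exp_neg_integrableOn_Ioi 0 ha))
      · exact hf3meas.aestronglyMeasurable
      · filter_upwards with p
        rw [Function.uncurry, Real.norm_eq_abs, abs_of_nonneg (hf3_nonneg p.1 p.2), one_mul]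
        exact hf3_le p.1 p.2
    have hswap := MeasureTheory.integral_integral_swap hint3
    have hinner : ∀ u ∈ Set.Ioi (0:ℝ),
        (∫ ω, Real.exp (-a * u) * Real.exp (-s * D' (u, ω)) ∂P)
          = Real.exp (-(a + φ s) * u) := by
      intro u hu
      have h1 : ∀ᵐ ω ∂P, Real.exp (-a * u) * Real.exp (-s * D' (u, ω))
          = Real.exp (-a * u) * Real.exp (-s * D u ω) := by
        filter_upwards [hDpath] with ω hp
        rw [hD'eq ω hp.1 hp.2.1 u (le_of_lt hu)]
      rw [integral_congr_ae h1, integral_const_mul, hLap u (le_of_lt hu) s hs,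
        ← Real.exp_add]
      congr 1
      ring
    calc ∫ ω, L ω ∂P = ∫ u in Set.Ioi (0:ℝ),
          ∫ ω, Real.exp (-a * u) * Real.exp (-s * D' (u, ω)) ∂P := hswap
      _ = ∫ u in Set.Ioi (0:ℝ), Real.exp (-(a + φ s) * u) :=
          setIntegral_congr_fun measurableSet_Ioi hinner
      _ = (a + φ s)⁻¹ := by
          rw [aux_exp_Ioi (by positivity) 0]
          simp [one_div]
  -- integrability of fun ω => exp (-a * E t ω)
  have hFint : ∀ t : ℝ, Integrable (fun ω => Real.exp (-a * E t ω)) P := by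
    intro t
    apply Integrable.mono' (integrable_const (1:ℝ))
      (Real.measurable_exp.comp ((hEmeas t).const_mul (-a))).aestronglyMeasurable
    filter_upwards with ω
    simp only [Function.comp_apply, Real.norm_eq_abs]
    rw [abs_of_pos (Real.exp_pos _)]
    apply Real.exp_le_one_iff.mpr
    nlinarith [hEnonneg t ω]
  have hFanti : Antitone (fun t => ∫ ω, Real.exp (-a * E t ω) ∂P) := by
    intro t1 t2 h12
    apply integral_mono_ae (hFint t2) (hFint t1)
    filter_upwards [hD0, hDpath] with ω h0 hp
    have hEmono : E t1 ω ≤ E t2 ω := by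
      rw [hE, hE]
      apply csInf_le_csInf (hSbdd t1 ω) (hSne ω h0 hp.2.2 t2)
      intro u hu
      exact ⟨hu.1, lt_of_le_of_lt h12 hu.2⟩
    apply Real.exp_le_exp.mpr
    nlinarith
  have hFnonneg : ∀ t : ℝ, 0 ≤ ∫ ω, Real.exp (-a * E t ω) ∂P :=
    fun t => integral_nonneg fun ω => (Real.exp_pos _).le
  have hFle : ∀ t : ℝ, ∫ ω, Real.exp (-a * E t ω) ∂P ≤ 1 := by
    intro t
    calc ∫ ω, Real.exp (-a * E t ω) ∂P ≤ ∫ _ω, (1:ℝ) ∂P := by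
          apply integral_mono (hFint t) (integrable_const 1)
          intro ω
          apply Real.exp_le_one_iff.mpr
          nlinarith [hEnonneg t ω]
      _ = 1 := by simp
  have hmainMeas : Measurable (fun t => Real.exp (-s * t) * ∫ ω, Real.exp (-a * E t ω) ∂P) :=
    (Real.measurable_exp.comp (measurable_id.const_mul (-s))).mul hFanti.measurable
  have hInt1 : IntegrableOn (fun t => Real.exp (-s * t) * ∫ ω, Real.exp (-a * E t ω) ∂P)
      (Set.Ioi (0 : ℝ)) := by
    apply Integrable.mono' (exp_neg_integrableOn_Ioi 0 hs) hmainMeas.aestronglyMeasurable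
    filter_upwards with t
    rw [Real.norm_eq_abs, abs_mul, abs_of_pos (Real.exp_pos _), abs_of_nonneg (hFnonneg t)]
    calc Real.exp (-s * t) * ∫ ω, Real.exp (-a * E t ω) ∂P
        ≤ Real.exp (-s * t) * 1 := mul_le_mul_of_nonneg_left (hFle t) (Real.exp_pos _).le
      _ = Real.exp (-s * t) := mul_one _
  refine ⟨hInt1, ?_⟩
  -- the final computation
  calc ∫ t in Set.Ioi (0 : ℝ), Real.exp (-s * t) * ∫ ω, Real.exp (-a * E t ω) ∂P
      = ∫ t in Set.Ioi (0 : ℝ), a * ∫ ω, Real.exp (-s * t) * K t ω ∂P := by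
        apply setIntegral_congr_fun measurableSet_Ioi
        intro t _
        beta_reduce
        rw [step1 t, integral_const_mul]
        ring
    _ = a * ∫ t in Set.Ioi (0 : ℝ), ∫ ω, Real.exp (-s * t) * K t ω ∂P := by rw [integral_const_mul]
    _ = a * ∫ ω, (∫ t in Set.Ioi (0 : ℝ), Real.exp (-s * t) * K t ω) ∂P := by rw [step3]
    _ = a * ∫ ω, (a⁻¹ * s⁻¹ - s⁻¹ * L ω) ∂P := by
        congr 1
        exact integral_congr_ae (Eventually.of_forall step4)
    _ = a * (a⁻¹ * s⁻¹ - s⁻¹ * ∫ ω, L ω ∂P) := by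
        rw [integral_sub (integrable_const _) (hLint.const_mul s⁻¹), integral_const,
          integral_const_mul]
        simp
    _ = φ s / (s * (φ s + a)) := by
        rw [step6]
        have h1 : a + φ s ≠ 0 := by positivity
        field_simp
        ring
end

section
/- Suppose the Laplace exponent φ is regularly varying at ∞ with index β ∈ (0,1). Then for every α ∈ (0,2) and all δ_1, δ_2 > 0, E[f_α(E_t) ; E_t ≤ δ_1] ~ E[f_α(E_t) ; E_t ≤ δ_2] as t ↓ 0, where E[f_α(E_t) ; E_t ≤ δ] denotes the expectation of f_α(E_t) restricted to the event {0 < E_t ≤ δ}. -/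
open MeasureTheory Filter Set

/-- `fα(t)`: the rate function `t^{1/α}` for `α ∈ (1,2)`, `t ln(1/t)` for `α = 1`,
and `t` for `α ∈ (0,1)`. -/
noncomputable def falpha (α t : ℝ) : ℝ :=
  if 1 < α then t ^ (1 / α) else if α = 1 then t * Real.log (1 / t) else t

lemma falpha_meas (α : ℝ) : Measurable (falpha α) := by
  unfold falpha
  split_ifs
  · fun_prop
  · exact measurable_id.mul (Real.measurable_log.comp (measurable_const.div measurable_id))
  · exact measurable_id

lemma falpha_abs_le {α δ x : ℝ} (hx : 0 < x) (hδ : x ≤ δ) : |falpha α x| ≤ δ ^ 2 + 1 := by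
  have hδ0 : 0 < δ := hx.trans_le hδ
  unfold falpha
  split_ifs with h1 h2
  · rw [abs_of_nonneg (Real.rpow_nonneg hx.le _)]
    have h1α : 0 < 1/α := by positivity
    have : x ^ (1/α) ≤ δ ^ (1/α) := Real.rpow_le_rpow hx.le hδ h1α.le
    refine this.trans ?_
    rcases le_or_gt δ 1 with h | h
    · have := Real.rpow_le_one hδ0.le h h1α.le
      nlinarith
    · have : δ ^ (1/α) ≤ δ ^ (1:ℝ) :=
        Real.rpow_le_rpow_of_exponent_le h.le (by rw [div_le_one] <;> linarith)
      rw [Real.rpow_one] at this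
      nlinarith
  · rw [one_div, Real.log_inv, mul_comm, abs_mul, abs_neg]
    have hlog : |Real.log x| ≤ x + 1/x := by
      rcases le_or_gt 1 x with h | h
      · rw [abs_of_nonneg (Real.log_nonneg h)]
        have h3 : 0 < 1/x := by positivity
        linarith [Real.log_le_sub_one_of_pos hx]
      · rw [abs_of_nonpos (Real.log_nonpos hx.le h.le)]
        have h2 : Real.log (1/x) ≤ 1/x - 1 := Real.log_le_sub_one_of_pos (by positivity)
        rw [one_div, Real.log_inv] at h2
        rw [one_div]
        linarith
    rw [abs_of_pos hx]
    calc |Real.log x| * x ≤ (x + 1/x) * x := by nlinarith [abs_nonneg (Real.log x)]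
    _ = x^2 + 1 := by field_simp
    _ ≤ δ^2 + 1 := by nlinarith
  · rw [abs_of_pos hx]; nlinarith

lemma le_falpha {α x : ℝ} (hx : 0 < x) (hxe : x ≤ Real.exp (-1)) : x ≤ falpha α x := by
  have he1 : Real.exp (-1 : ℝ) ≤ 1 := by
    rw [show (1:ℝ) = Real.exp 0 by simp]
    exact Real.exp_le_exp.mpr (by norm_num)
  have hx1 : x ≤ 1 := hxe.trans he1
  unfold falpha
  split_ifs with h1 h2
  · have h1α : 1/α ≤ 1 := by rw [div_le_one] <;> linarith
    calc x = x ^ (1:ℝ) := (Real.rpow_one x).symm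
    _ ≤ x ^ (1/α) := Real.rpow_le_rpow_of_exponent_ge hx hx1 h1α
  · have : 1 ≤ Real.log (1/x) := by
      rw [one_div, Real.log_inv]
      have : Real.log x ≤ Real.log (Real.exp (-1)) := Real.log_le_log hx hxe
      rw [Real.log_exp] at this
      linarith
    nlinarith
  · exact le_rfl

lemma tendsto_mul_exp {d : ℝ} (hd : 0 < d) :
    Tendsto (fun y : ℝ => y * Real.exp (1 - d * y)) atTop (nhds 0) := by
  have h := Real.tendsto_pow_mul_exp_neg_atTop_nhds_zero 1
  simp only [pow_one] at h
  have h2 : Tendsto (fun y : ℝ => d * y) atTop atTop :=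
    Tendsto.const_mul_atTop hd tendsto_id
  have h3 : Tendsto (fun y : ℝ => (d*y) * Real.exp (-(d*y))) atTop (nhds 0) := h.comp h2
  have h4 : Tendsto (fun y : ℝ => (Real.exp 1 / d) * ((d*y) * Real.exp (-(d*y)))) atTop
      (nhds ((Real.exp 1 / d) * 0)) := h3.const_mul _
  rw [mul_zero] at h4
  refine h4.congr' ?_
  filter_upwards [eventually_gt_atTop 0] with y hy
  rw [Real.exp_sub, Real.exp_neg]
  field_simp

section SubordinatorAux
variable {Ω : Type*} [MeasurableSpace Ω] (P : Measure Ω) [IsProbabilityMeasure P]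

lemma exp_int (D : ℝ → Ω → ℝ) (hDmeas : ∀ u : ℝ, Measurable (D u))
    (hDnonneg : ∀ u ω, 0 ≤ D u ω) (u lam : ℝ) (hlam : 0 < lam) :
    Integrable (fun ω => Real.exp (-lam * D u ω)) P := by
  refine Integrable.mono' (integrable_const 1) ((Real.measurable_exp.comp
    ((hDmeas u).const_mul (-lam))).aestronglyMeasurable) ?_
  filter_upwards with ω
  rw [Real.norm_eq_abs, abs_of_pos (Real.exp_pos _)]
  exact Real.exp_le_one_iff.mpr (by nlinarith [hDnonneg u ω])

lemma upper_bd (D : ℝ → Ω → ℝ) (φ : ℝ → ℝ) (hDmeas : ∀ u : ℝ, Measurable (D u))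
    (hDnonneg : ∀ u ω, 0 ≤ D u ω)
    (hLap : ∀ u : ℝ, 0 ≤ u → ∀ l : ℝ, 0 < l →
      ∫ ω, Real.exp (-l * D u ω) ∂P = Real.exp (-u * φ l))
    (t u lam : ℝ) (hu : 0 ≤ u) (hlam : 0 < lam) :
    (P {ω | D u ω ≤ t}).toReal ≤ Real.exp (lam * t - u * φ lam) := by
  have hSm : MeasurableSet {ω | D u ω ≤ t} := measurableSet_le (hDmeas u) measurable_const
  have hint := exp_int P D hDmeas hDnonneg u lam hlam
  have key : Real.exp (-lam * t) * (P {ω | D u ω ≤ t}).toReal ≤ Real.exp (-u * φ lam) := by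
    rw [← hLap u hu lam hlam]
    calc Real.exp (-lam * t) * (P {ω | D u ω ≤ t}).toReal
        = ∫ _ω in {ω | D u ω ≤ t}, Real.exp (-lam * t) ∂P := by
          rw [setIntegral_const]; rw [smul_eq_mul]; ring; rfl
      _ ≤ ∫ ω in {ω | D u ω ≤ t}, Real.exp (-lam * D u ω) ∂P := by
          refine setIntegral_mono_on (integrableOn_const (measure_ne_top _ _))
            hint.integrableOn hSm (fun ω hω => Real.exp_le_exp.mpr ?_)
          have : D u ω ≤ t := hω
          nlinarith
      _ ≤ ∫ ω, Real.exp (-lam * D u ω) ∂P := by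
          refine setIntegral_le_integral hint ?_
          filter_upwards with ω using (Real.exp_pos _).le
  calc (P {ω | D u ω ≤ t}).toReal
      = Real.exp (lam * t) * (Real.exp (-lam * t) * (P {ω | D u ω ≤ t}).toReal) := by
        rw [← mul_assoc, ← Real.exp_add]; simp
    _ ≤ Real.exp (lam * t) * Real.exp (-u * φ lam) :=
        mul_le_mul_of_nonneg_left key (Real.exp_pos _).le
    _ = Real.exp (lam * t - u * φ lam) := by rw [← Real.exp_add]; ring_nf

lemma lower_bd (D : ℝ → Ω → ℝ) (φ : ℝ → ℝ) (hDmeas : ∀ u : ℝ, Measurable (D u))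
    (hDnonneg : ∀ u ω, 0 ≤ D u ω)
    (hLap : ∀ u : ℝ, 0 ≤ u → ∀ l : ℝ, 0 < l →
      ∫ ω, Real.exp (-l * D u ω) ∂P = Real.exp (-u * φ l))
    (t u lam : ℝ) (hu : 0 ≤ u) (hlam : 0 < lam) :
    Real.exp (-u * φ lam) - Real.exp (-lam * t) ≤ (P {ω | D u ω ≤ t}).toReal := by
  have hSm : MeasurableSet {ω | D u ω ≤ t} := measurableSet_le (hDmeas u) measurable_const
  have hint := exp_int P D hDmeas hDnonneg u lam hlam
  have hsplit : (∫ ω in {ω | D u ω ≤ t}, Real.exp (-lam * D u ω) ∂P)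
      + ∫ ω in {ω | D u ω ≤ t}ᶜ, Real.exp (-lam * D u ω) ∂P
      = ∫ ω, Real.exp (-lam * D u ω) ∂P := integral_add_compl hSm hint
  have h1 : (∫ ω in {ω | D u ω ≤ t}, Real.exp (-lam * D u ω) ∂P)
      ≤ (P {ω | D u ω ≤ t}).toReal := by
    calc (∫ ω in {ω | D u ω ≤ t}, Real.exp (-lam * D u ω) ∂P)
        ≤ ∫ _ω in {ω | D u ω ≤ t}, (1:ℝ) ∂P := by
          refine setIntegral_mono_on hint.integrableOn
            (integrableOn_const (measure_ne_top _ _)) hSm (fun ω _ => ?_)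
          exact Real.exp_le_one_iff.mpr (by nlinarith [hDnonneg u ω])
      _ = (P {ω | D u ω ≤ t}).toReal := by rw [setIntegral_const, smul_eq_mul, mul_one]; rfl
  have h2 : (∫ ω in {ω | D u ω ≤ t}ᶜ, Real.exp (-lam * D u ω) ∂P) ≤ Real.exp (-lam * t) := by
    calc (∫ ω in {ω | D u ω ≤ t}ᶜ, Real.exp (-lam * D u ω) ∂P)
        ≤ ∫ _ω in {ω | D u ω ≤ t}ᶜ, Real.exp (-lam * t) ∂P := by
          refine setIntegral_mono_on hint.integrableOn
            (integrableOn_const (measure_ne_top _ _)) hSm.compl (fun ω hω => ?_)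
          have : t < D u ω := not_le.mp hω
          exact Real.exp_le_exp.mpr (by nlinarith)
      _ = (P {ω | D u ω ≤ t}ᶜ).toReal * Real.exp (-lam * t) := by
          rw [setIntegral_const, smul_eq_mul]; rfl
      _ ≤ 1 * Real.exp (-lam * t) := by
          refine mul_le_mul_of_nonneg_right ?_ (Real.exp_pos _).le
          exact ENNReal.toReal_le_of_le_ofReal one_pos.le (by simpa using prob_le_one)
      _ = Real.exp (-lam * t) := one_mul _
  have := hLap u hu lam hlam
  linarith [hsplit, this]

omit [IsProbabilityMeasure P] in
lemma path_facts (D : ℝ → Ω → ℝ) (E : ℝ → Ω → ℝ)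
    (hDpath : ∀ᵐ ω ∂P,
      (∀ u : ℝ, 0 ≤ u → ContinuousWithinAt (fun v => D v ω) (Set.Ici u) u) ∧
      StrictMonoOn (fun u => D u ω) (Set.Ici (0 : ℝ)) ∧
      (∀ M : ℝ, ∃ u : ℝ, 0 ≤ u ∧ M < D u ω))
    (hE : ∀ t ω, E t ω = sInf {u : ℝ | 0 < u ∧ t < D u ω}) :
    ∀ᵐ ω ∂P, ∀ t v : ℝ, 0 < v →
      (v < E t ω → D v ω ≤ t) ∧ (D v ω ≤ t → v ≤ E t ω) := by
  filter_upwards [hDpath] with ω hω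
  obtain ⟨-, hmono, hunb⟩ := hω
  intro t v hv
  constructor
  · intro hvE
    by_contra h
    push_neg at h
    have hle : E t ω ≤ v := by
      rw [hE]
      exact csInf_le ⟨0, fun b hb => hb.1.le⟩ ⟨hv, h⟩
    linarith
  · intro hDv
    rw [hE]
    obtain ⟨w, hw0, hwD⟩ := hunb t
    have hmem : w + 1 ∈ {u : ℝ | 0 < u ∧ t < D u ω} := by
      refine ⟨by linarith, lt_trans hwD ?_⟩
      exact hmono (mem_Ici.mpr hw0) (mem_Ici.mpr (by linarith)) (by linarith)
    refine le_csInf ⟨_, hmem⟩ ?_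
    rintro b ⟨hb0, hbD⟩
    by_contra hbv
    push_neg at hbv
    have : D b ω < D v ω := hmono (mem_Ici.mpr hb0.le) (mem_Ici.mpr hv.le) hbv
    linarith

lemma core (D : ℝ → Ω → ℝ) (φ : ℝ → ℝ) (E : ℝ → Ω → ℝ)
    (hDmeas : ∀ u : ℝ, Measurable (D u))
    (hDnonneg : ∀ u ω, 0 ≤ D u ω)
    (hDpath : ∀ᵐ ω ∂P,
      (∀ u : ℝ, 0 ≤ u → ContinuousWithinAt (fun v => D v ω) (Set.Ici u) u) ∧
      StrictMonoOn (fun u => D u ω) (Set.Ici (0 : ℝ)) ∧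
      (∀ M : ℝ, ∃ u : ℝ, 0 ≤ u ∧ M < D u ω))
    (hφpos : ∀ l : ℝ, 0 < l → 0 < φ l)
    (hφtop : Tendsto φ atTop atTop)
    (hLap : ∀ u : ℝ, 0 ≤ u → ∀ l : ℝ, 0 < l →
      ∫ ω, Real.exp (-l * D u ω) ∂P = Real.exp (-u * φ l))
    (hE : ∀ t ω, E t ω = sInf {u : ℝ | 0 < u ∧ t < D u ω})
    (hEmeas : ∀ t : ℝ, Measurable (E t))
    (hRV3 : ∀ᶠ l in atTop, φ (2 * l) ≤ 3 * φ l)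
    (α : ℝ) (δ δ' : ℝ) (hδ : 0 < δ) (hδδ' : δ ≤ δ') :
    (∀ᶠ t in nhdsWithin 0 (Set.Ioi 0),
      0 < ∫ ω in {ω | 0 < E t ω ∧ E t ω ≤ δ}, falpha α (E t ω) ∂P) ∧
    Tendsto (fun t =>
        (∫ ω in {ω | 0 < E t ω ∧ E t ω ≤ δ'}, falpha α (E t ω) ∂P) /
        (∫ ω in {ω | 0 < E t ω ∧ E t ω ≤ δ}, falpha α (E t ω) ∂P))
      (nhdsWithin 0 (Set.Ioi 0)) (nhds 1) := by
  classical
  set l : Filter ℝ := nhdsWithin 0 (Set.Ioi 0) with hl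
  set c : ℝ := min δ (Real.exp (-1)) with hc
  have hc0 : 0 < c := lt_min hδ (Real.exp_pos _)
  have hcδ : c ≤ δ := min_le_left _ _
  have hce : c ≤ Real.exp (-1) := min_le_right _ _
  set B : ℝ := δ' ^ 2 + 1 with hB
  have hδ'0 : 0 < δ' := lt_of_lt_of_le hδ hδδ'
  have hB0 : 0 < B := by positivity
  set q : ℝ := Real.exp (-1) - Real.exp (-2) with hq
  have hq0 : 0 < q := by
    have : Real.exp (-2 : ℝ) < Real.exp (-1) := Real.exp_lt_exp.mpr (by norm_num)
    simpa [hq] using sub_pos.mpr this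
  set I : ℝ → ℝ → ℝ := fun γ t => ∫ ω in {ω | 0 < E t ω ∧ E t ω ≤ γ}, falpha α (E t ω) ∂P
    with hI
  -- measurability of sets and integrand
  have hAmeas : ∀ t γ : ℝ, MeasurableSet {ω | 0 < E t ω ∧ E t ω ≤ γ} := fun t γ =>
    (measurableSet_lt measurable_const (hEmeas t)).inter
      (measurableSet_le (hEmeas t) measurable_const)
  have hgmeas : ∀ t : ℝ, Measurable fun ω => falpha α (E t ω) := fun t =>
    (falpha_meas α).comp (hEmeas t)
  have hgint : ∀ t γ : ℝ, 0 < γ →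
      IntegrableOn (fun ω => falpha α (E t ω)) {ω | 0 < E t ω ∧ E t ω ≤ γ} P := by
    intro t γ hγ
    refine Integrable.mono' (integrable_const (γ ^ 2 + 1))
      (hgmeas t).aestronglyMeasurable.restrict ?_
    rw [ae_restrict_iff' (hAmeas t γ)]
    filter_upwards with ω hω
    rw [Real.norm_eq_abs]
    exact falpha_abs_le hω.1 hω.2
  -- tail bounds on E
  have hpf := path_facts P D E hDpath hE
  have hEtail : ∀ t v : ℝ, 0 < t → 0 < v →
      (P {ω | v < E t ω}).toReal ≤ Real.exp (1 - v * φ (1 / t)) := by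
    intro t v ht hv
    have hsub : {ω | v < E t ω} ≤ᶠ[ae P] {ω | D v ω ≤ t} := by
      filter_upwards [hpf] with ω hω hvE
      exact ((hω t v hv).1 hvE : D v ω ≤ t)
    have h1 : (P {ω | v < E t ω}).toReal ≤ (P {ω | D v ω ≤ t}).toReal :=
      ENNReal.toReal_mono (measure_ne_top _ _) (measure_mono_ae hsub)
    refine h1.trans ?_
    have := upper_bd P D φ hDmeas hDnonneg hLap t v (1 / t) hv.le (by positivity)
    rwa [one_div, inv_mul_cancel₀ ht.ne', ← one_div] at this
  have hElow : ∀ t v : ℝ, 0 < t → 0 < v →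
      Real.exp (-v * φ (2 / t)) - Real.exp (-2) ≤ (P {ω | v ≤ E t ω}).toReal := by
    intro t v ht hv
    have hsub : {ω | D v ω ≤ t} ≤ᶠ[ae P] {ω | v ≤ E t ω} := by
      filter_upwards [hpf] with ω hω hD
      exact ((hω t v hv).2 hD : v ≤ E t ω)
    have h1 : (P {ω | D v ω ≤ t}).toReal ≤ (P {ω | v ≤ E t ω}).toReal :=
      ENNReal.toReal_mono (measure_ne_top _ _) (measure_mono_ae hsub)
    refine le_trans ?_ h1
    have := lower_bd P D φ hDmeas hDnonneg hLap t v (2 / t) hv.le (by positivity)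
    have h2 : -(2 / t) * t = -2 := by field_simp
    rwa [h2] at this
  -- filter limits
  have h1t : Tendsto (fun t : ℝ => 1 / t) l atTop := by
    simpa [one_div] using (tendsto_inv_nhdsGT_zero : Tendsto (fun x : ℝ => x⁻¹) _ atTop)
  have hX : Tendsto (fun t : ℝ => φ (1 / t)) l atTop := hφtop.comp h1t
  have hφ2t : Tendsto (fun t : ℝ => φ (2 / t)) l atTop := by
    refine hφtop.comp ?_
    have := Tendsto.const_mul_atTop (two_pos) h1t
    exact this.congr (fun t => mul_one_div 2 t)
  have ev1 : ∀ᶠ t in l, (0:ℝ) < t := by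
    rw [hl]
    exact eventually_mem_nhdsWithin.mono (fun t ht => ht)
  have ev2 : ∀ᶠ t in l, φ (2 / t) ≤ 3 * φ (1 / t) := by
    filter_upwards [h1t.eventually hRV3] with t ht
    rwa [mul_one_div] at ht
  have ev3 : ∀ᶠ t in l, 0 < φ (2 / t) := hφ2t.eventually_gt_atTop 0
  have ev4 : ∀ᶠ t in l, 1 / φ (2 / t) ≤ c := by
    filter_upwards [hφ2t.eventually_ge_atTop (1 / c), ev3] with t h1 h2
    rw [div_le_iff₀ h2]
    calc (1:ℝ) = c * (1 / c) := by field_simp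
    _ ≤ c * φ (2 / t) := by
        exact mul_le_mul_of_nonneg_left h1 hc0.le
  have hexp0 : Tendsto (fun t : ℝ => Real.exp (1 - c * φ (1 / t))) l (nhds 0) := by
    have h2 : Tendsto (fun y : ℝ => 1 - c * y) atTop atBot := by
      simp only [sub_eq_add_neg]
      exact tendsto_atBot_add_const_left _ 1
        (tendsto_neg_atBot_iff.mpr (Tendsto.const_mul_atTop hc0 tendsto_id))
    exact (Real.tendsto_exp_atBot.comp h2).comp hX
  have evq2 : ∀ᶠ t in l, Real.exp (1 - c * φ (1 / t)) ≤ q / 2 :=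
    (hexp0.eventually_lt_const (by positivity)).mono (fun t ht => ht.le)
  have evq12 : ∀ᶠ t in l, B * (φ (1 / t) * Real.exp (1 - c * φ (1 / t))) ≤ q / 12 := by
    have h := (((tendsto_mul_exp hc0).comp hX).const_mul B)
    rw [mul_zero] at h
    exact (h.eventually_lt_const (by positivity)).mono (fun t ht => ht.le)
  -- main per-t estimate
  have main : ∀ᶠ t in l, (0 < φ (1 / t)) ∧ q / (12 * φ (1 / t)) ≤ I δ t ∧
      |I δ' t - I δ t| ≤ B * Real.exp (1 - δ * φ (1 / t)) := by
    filter_upwards [ev1, ev2, ev3, ev4, evq2, evq12, hX.eventually_gt_atTop 0] with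
      t ht hφ23 hφ2 huc hq2 hq12 hX0
    refine ⟨hX0, ?_, ?_⟩
    · -- lower bound on I δ t
      set u : ℝ := 1 / φ (2 / t) with hudef
      have hu0 : 0 < u := by positivity
      set X : ℝ := φ (1 / t) with hXdef
      set Bt : Set Ω := {ω | u ≤ E t ω ∧ E t ω ≤ c} with hBt
      have hBtmeas : MeasurableSet Bt :=
        (measurableSet_le measurable_const (hEmeas t)).inter
          (measurableSet_le (hEmeas t) measurable_const)
      have hBtsub : Bt ⊆ {ω | 0 < E t ω ∧ E t ω ≤ c} :=
        fun ω hω => ⟨lt_of_lt_of_le hu0 hω.1, hω.2⟩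
      -- split A_δ
      have hsetδ : {ω | 0 < E t ω ∧ E t ω ≤ δ} =
          {ω | 0 < E t ω ∧ E t ω ≤ c} ∪ {ω | c < E t ω ∧ E t ω ≤ δ} := by
        ext ω
        simp only [mem_setOf_eq, mem_union]
        constructor
        · rintro ⟨h1, h2⟩
          rcases le_or_gt (E t ω) c with h | h
          · exact Or.inl ⟨h1, h⟩
          · exact Or.inr ⟨h, h2⟩
        · rintro (⟨h1, h2⟩ | ⟨h1, h2⟩)
          · exact ⟨h1, h2.trans hcδ⟩
          · exact ⟨hc0.trans h1, h2⟩
      have hmidmeas : MeasurableSet {ω | c < E t ω ∧ E t ω ≤ δ} :=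
        (measurableSet_lt measurable_const (hEmeas t)).inter
          (measurableSet_le (hEmeas t) measurable_const)
      have hdisj : Disjoint {ω | 0 < E t ω ∧ E t ω ≤ c} {ω | c < E t ω ∧ E t ω ≤ δ} := by
        rw [Set.disjoint_left]
        rintro ω ⟨_, h2⟩ ⟨h3, _⟩
        exact absurd h2 (not_le.mpr h3)
      have hmidint : IntegrableOn (fun ω => falpha α (E t ω)) {ω | c < E t ω ∧ E t ω ≤ δ} P :=
        (hgint t δ hδ).mono_set (fun ω hω => ⟨hc0.trans hω.1, hω.2⟩)
      have hIδsplit : I δ t = (∫ ω in {ω | 0 < E t ω ∧ E t ω ≤ c}, falpha α (E t ω) ∂P)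
          + ∫ ω in {ω | c < E t ω ∧ E t ω ≤ δ}, falpha α (E t ω) ∂P := by
        rw [hI]
        simp only
        rw [hsetδ]
        exact setIntegral_union hdisj hmidmeas (hgint t c hc0) hmidint
      -- first piece
      have h1 : u * (P Bt).toReal ≤
          ∫ ω in {ω | 0 < E t ω ∧ E t ω ≤ c}, falpha α (E t ω) ∂P := by
        have hstep1 : (∫ ω in Bt, falpha α (E t ω) ∂P) ≤
            ∫ ω in {ω | 0 < E t ω ∧ E t ω ≤ c}, falpha α (E t ω) ∂P := by
          refine setIntegral_mono_set (hgint t c hc0) ?_ hBtsub.eventuallyLE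
          rw [Filter.EventuallyLE, ae_restrict_iff' (hAmeas t c)]
          filter_upwards with ω hω
          exact le_trans hω.1.le (le_falpha hω.1 (hω.2.trans hce))
        have hstep2 : u * (P Bt).toReal ≤ ∫ ω in Bt, falpha α (E t ω) ∂P := by
          have := setIntegral_mono_on
            (integrableOn_const (measure_ne_top P Bt))
            ((hgint t c hc0).mono_set hBtsub) hBtmeas
            (fun ω hω => le_trans hω.1 (le_falpha (lt_of_lt_of_le hu0 hω.1) (hω.2.trans hce)))
          rwa [setIntegral_const, smul_eq_mul, mul_comm] at this
        exact hstep2.trans hstep1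
      -- measure of Bt
      have hPBt : q - Real.exp (1 - c * X) ≤ (P Bt).toReal := by
        have hsub2 : {ω | u ≤ E t ω} ⊆ Bt ∪ {ω | c < E t ω} := by
          intro ω h
          rcases le_or_gt (E t ω) c with h2 | h2
          · exact Or.inl ⟨h, h2⟩
          · exact Or.inr h2
        have hun : (P {ω | u ≤ E t ω}).toReal ≤ (P Bt).toReal + (P {ω | c < E t ω}).toReal := by
          calc (P {ω | u ≤ E t ω}).toReal ≤ (P Bt + P {ω | c < E t ω}).toReal := by
                refine ENNReal.toReal_mono
                  (ENNReal.add_ne_top.mpr ⟨measure_ne_top _ _, measure_ne_top _ _⟩) ?_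
                exact le_trans (measure_mono hsub2) (measure_union_le _ _)
          _ = (P Bt).toReal + (P {ω | c < E t ω}).toReal :=
                ENNReal.toReal_add (measure_ne_top _ _) (measure_ne_top _ _)
        have hlo : q ≤ (P {ω | u ≤ E t ω}).toReal := by
          have := hElow t u ht hu0
          have huφ : -u * φ (2 / t) = -1 := by
            rw [hudef]
            field_simp
          rwa [huφ, ← hq] at this
        have hup : (P {ω | c < E t ω}).toReal ≤ Real.exp (1 - c * X) := hEtail t c ht hc0
        linarith
      -- second piece
      have h2 : -(B * Real.exp (1 - c * X)) ≤
          ∫ ω in {ω | c < E t ω ∧ E t ω ≤ δ}, falpha α (E t ω) ∂P := by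
        have habs : ‖∫ ω in {ω | c < E t ω ∧ E t ω ≤ δ}, falpha α (E t ω) ∂P‖ ≤
            B * (P {ω | c < E t ω ∧ E t ω ≤ δ}).toReal := by
          refine norm_setIntegral_le_of_norm_le_const (measure_lt_top _ _) (fun ω hω => ?_)
          rw [Real.norm_eq_abs]
          exact falpha_abs_le (hc0.trans hω.1) (hω.2.trans hδδ')
        have hP2 : (P {ω | c < E t ω ∧ E t ω ≤ δ}).toReal ≤ Real.exp (1 - c * X) :=
          le_trans (ENNReal.toReal_mono (measure_ne_top _ _)
            (measure_mono (fun ω hω => hω.1))) (hEtail t c ht hc0)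
        rw [Real.norm_eq_abs] at habs
        have := (abs_le.mp (habs.trans (mul_le_mul_of_nonneg_left hP2 hB0.le))).1
        linarith
      -- combine
      have hu3X : 1 / (3 * X) ≤ u := by
        rw [hudef]
        refine one_div_le_one_div_of_le hφ2 ?_
        rwa [hXdef] at hφ23 ⊢
      have hBexp : B * Real.exp (1 - c * X) ≤ q / (12 * X) := by
        rw [le_div_iff₀ (by positivity)]
        calc B * Real.exp (1 - c * X) * (12 * X) = 12 * (B * (X * Real.exp (1 - c * X))) := by
              ring
        _ ≤ 12 * (q / 12) := by
              exact mul_le_mul_of_nonneg_left hq12 (by norm_num)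
        _ = q := by ring
      have hPBt2 : q / 2 ≤ (P Bt).toReal := by
        have : q - Real.exp (1 - c * X) ≥ q - q / 2 := by linarith
        linarith
      calc q / (12 * X) = 1 / (3 * X) * (q / 2) - q / (12 * X) := by
            field_simp
            ring
      _ ≤ u * (P Bt).toReal - B * Real.exp (1 - c * X) := by
            have hmul : 1 / (3 * X) * (q / 2) ≤ u * (P Bt).toReal := by
              refine mul_le_mul hu3X hPBt2 (by positivity) hu0.le
            linarith [hBexp]
      _ ≤ I δ t := by
            rw [hIδsplit]
            linarith
    · -- difference bound
      set X : ℝ := φ (1 / t) with hXdef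
      have hsetδ' : {ω | 0 < E t ω ∧ E t ω ≤ δ'} =
          {ω | 0 < E t ω ∧ E t ω ≤ δ} ∪ {ω | δ < E t ω ∧ E t ω ≤ δ'} := by
        ext ω
        simp only [mem_setOf_eq, mem_union]
        constructor
        · rintro ⟨h1, h2⟩
          rcases le_or_gt (E t ω) δ with h | h
          · exact Or.inl ⟨h1, h⟩
          · exact Or.inr ⟨h, h2⟩
        · rintro (⟨h1, h2⟩ | ⟨h1, h2⟩)
          · exact ⟨h1, h2.trans hδδ'⟩
          · exact ⟨hδ.trans h1, h2⟩
      have hmidmeas : MeasurableSet {ω | δ < E t ω ∧ E t ω ≤ δ'} :=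
        (measurableSet_lt measurable_const (hEmeas t)).inter
          (measurableSet_le (hEmeas t) measurable_const)
      have hdisj : Disjoint {ω | 0 < E t ω ∧ E t ω ≤ δ} {ω | δ < E t ω ∧ E t ω ≤ δ'} := by
        rw [Set.disjoint_left]
        rintro ω ⟨_, h2⟩ ⟨h3, _⟩
        exact absurd h2 (not_le.mpr h3)
      have hmidint : IntegrableOn (fun ω => falpha α (E t ω)) {ω | δ < E t ω ∧ E t ω ≤ δ'} P :=
        (hgint t δ' hδ'0).mono_set (fun ω hω => ⟨hδ.trans hω.1, hω.2⟩)
      have hIsplit : I δ' t = I δ t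
          + ∫ ω in {ω | δ < E t ω ∧ E t ω ≤ δ'}, falpha α (E t ω) ∂P := by
        rw [hI]
        simp only
        rw [hsetδ']
        exact setIntegral_union hdisj hmidmeas (hgint t δ hδ) hmidint
      have habs : ‖∫ ω in {ω | δ < E t ω ∧ E t ω ≤ δ'}, falpha α (E t ω) ∂P‖ ≤
          B * (P {ω | δ < E t ω ∧ E t ω ≤ δ'}).toReal := by
        refine norm_setIntegral_le_of_norm_le_const (measure_lt_top _ _) (fun ω hω => ?_)
        rw [Real.norm_eq_abs]
        exact falpha_abs_le (hδ.trans hω.1) hω.2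
      have hP2 : (P {ω | δ < E t ω ∧ E t ω ≤ δ'}).toReal ≤ Real.exp (1 - δ * X) :=
        le_trans (ENNReal.toReal_mono (measure_ne_top _ _)
          (measure_mono (fun ω hω => hω.1))) (hEtail t δ ht hδ)
      rw [hIsplit]
      simp only [add_sub_cancel_left]
      rw [← Real.norm_eq_abs]
      exact habs.trans (mul_le_mul_of_nonneg_left hP2 hB0.le)
  -- conclude
  have hpos : ∀ᶠ t in l, 0 < I δ t := by
    filter_upwards [main] with t ⟨hX0, hN, _⟩
    exact lt_of_lt_of_le (by positivity) hN
  refine ⟨hpos, ?_⟩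
  have key : Tendsto (fun t => I δ' t / I δ t - 1) l (nhds 0) := by
    refine squeeze_zero_norm'
      (a := fun t => 12 * B / q * (φ (1 / t) * Real.exp (1 - δ * φ (1 / t)))) ?_ ?_
    · filter_upwards [main] with t ⟨hX0, hN, hR⟩
      have hN0 : 0 < I δ t := lt_of_lt_of_le (by positivity) hN
      have heq : I δ' t / I δ t - 1 = (I δ' t - I δ t) / I δ t := by
        field_simp
      rw [Real.norm_eq_abs, heq, abs_div, abs_of_pos hN0]
      calc |I δ' t - I δ t| / I δ t
          ≤ (B * Real.exp (1 - δ * φ (1 / t))) / (q / (12 * φ (1 / t))) := by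
            exact div_le_div₀ (by positivity) hR (by positivity) hN
      _ = 12 * B / q * (φ (1 / t) * Real.exp (1 - δ * φ (1 / t))) := by
            field_simp
    · have h := (((tendsto_mul_exp hδ).comp hX).const_mul (12 * B / q))
      rw [mul_zero] at h
      exact h
  have := key.add (tendsto_const_nhds (x := (1:ℝ)) (f := l))
  simp only [zero_add, sub_add_cancel] at this
  exact this

end SubordinatorAux

/-- If `φ` is regularly varying at `∞` with index `β ∈ (0,1)`, then for every `α ∈ (0,2)`
and `δ₁, δ₂ > 0`, `E[fα(E_t) ; E_t ≤ δ₁] ~ E[fα(E_t) ; E_t ≤ δ₂]` as `t ↓ 0`. -/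
theorem stmt_13
    {Ω : Type*} [MeasurableSpace Ω] (P : Measure Ω) [IsProbabilityMeasure P]
    (D : ℝ → Ω → ℝ) (φ : ℝ → ℝ) (E : ℝ → Ω → ℝ)
    (hDmeas : ∀ u : ℝ, Measurable (D u))
    (hDnonneg : ∀ u ω, 0 ≤ D u ω)
    (hD0 : ∀ᵐ ω ∂P, D 0 ω = 0)
    (hDpath : ∀ᵐ ω ∂P,
      (∀ u : ℝ, 0 ≤ u → ContinuousWithinAt (fun v => D v ω) (Set.Ici u) u) ∧
      StrictMonoOn (fun u => D u ω) (Set.Ici (0 : ℝ)) ∧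
      (∀ M : ℝ, ∃ u : ℝ, 0 ≤ u ∧ M < D u ω))
    (hφpos : ∀ l : ℝ, 0 < l → 0 < φ l)
    (hφmono : StrictMonoOn φ (Set.Ioi (0 : ℝ)))
    (hφ0 : Tendsto φ (nhdsWithin 0 (Set.Ioi 0)) (nhds 0))
    (hφtop : Tendsto φ atTop atTop)
    (hLap : ∀ u : ℝ, 0 ≤ u → ∀ l : ℝ, 0 < l →
      ∫ ω, Real.exp (-l * D u ω) ∂P = Real.exp (-u * φ l))
    (hE : ∀ t ω, E t ω = sInf {u : ℝ | 0 < u ∧ t < D u ω})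
    (hEmeas : ∀ t : ℝ, Measurable (E t))
    (β : ℝ) (hβ0 : 0 < β) (hβ1 : β < 1)
    (hRV : ∀ a : ℝ, 0 < a →
      Tendsto (fun l => φ (a * l) / φ l) atTop (nhds (a ^ β)))
    (α : ℝ) (hα0 : 0 < α) (hα2 : α < 2) (δ₁ δ₂ : ℝ) (hδ₁ : 0 < δ₁) (hδ₂ : 0 < δ₂) :
    Tendsto
      (fun t =>
        (∫ ω in {ω | 0 < E t ω ∧ E t ω ≤ δ₁}, falpha α (E t ω) ∂P) /
        (∫ ω in {ω | 0 < E t ω ∧ E t ω ≤ δ₂}, falpha α (E t ω) ∂P))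
      (nhdsWithin 0 (Set.Ioi 0)) (nhds 1) := by
  have hRV3 : ∀ᶠ l in atTop, φ (2 * l) ≤ 3 * φ l := by
    have h2β : (2:ℝ) ^ β < 3 := by
      have h1 : (2:ℝ) ^ β ≤ (2:ℝ) ^ (1:ℝ) :=
        Real.rpow_le_rpow_of_exponent_le one_le_two hβ1.le
      rw [Real.rpow_one] at h1
      linarith
    filter_upwards [(hRV 2 two_pos).eventually_lt_const h2β, eventually_gt_atTop (0:ℝ)]
      with x hx hx0
    have hφx : 0 < φ x := hφpos x hx0
    rw [div_lt_iff₀ hφx] at hx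
    linarith
  set δ : ℝ := min δ₁ δ₂ with hδdef
  have hδ : 0 < δ := lt_min hδ₁ hδ₂
  obtain ⟨hpos, T1⟩ := core P D φ E hDmeas hDnonneg hDpath hφpos hφtop hLap hE hEmeas hRV3
    α δ δ₁ hδ (min_le_left _ _)
  obtain ⟨-, T2⟩ := core P D φ E hDmeas hDnonneg hDpath hφpos hφtop hLap hE hEmeas hRV3
    α δ δ₂ hδ (min_le_right _ _)
  have T := T1.div T2 one_ne_zero
  rw [div_one] at T
  refine T.congr' ?_
  filter_upwards [hpos] with t ht
  exact div_div_div_cancel_right₀ ht.ne' _ _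
end

section
/- Suppose the Laplace exponent φ is regularly varying at ∞ with index β ∈ (0,1). Then for every α ∈ (0,2) and every δ > 0, P(E_t > δ) = o(E[f_α(E_t) ; E_t ≤ δ]) as t ↓ 0; that is, P(E_t > δ) / E[f_α(E_t) ; E_t ≤ δ] → 0 as t ↓ 0. -/
open MeasureTheory Filter Set

lemma exp_neg_one_lt_one : Real.exp (-1) < 1 :=
  Real.exp_lt_one_iff.2 (by norm_num)

lemma falpha_lb (α x : ℝ) (hα : 0 < α) (hx0 : 0 < x) (hx1 : x ≤ Real.exp (-1)) :
    x ≤ falpha α x := by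
  have hxle1 : x ≤ 1 := hx1.trans exp_neg_one_lt_one.le
  unfold falpha
  split_ifs with h1 h2
  · calc x = x ^ (1 : ℝ) := (Real.rpow_one x).symm
      _ ≤ x ^ (1 / α) := Real.rpow_le_rpow_of_exponent_ge hx0 hxle1
        (by rw [div_le_one hα]; linarith)
  · have hlog : 1 ≤ Real.log (1 / x) := by
      rw [one_div, Real.log_inv]
      have : Real.log x ≤ -1 := (Real.log_le_iff_le_exp hx0).2 hx1
      linarith
    nlinarith
  · exact le_refl _

lemma falpha_ge_negM (α x δ : ℝ) (hx0 : 0 < x) (hxδ : x ≤ δ) (hδ : 0 < δ) :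
    -(δ * |Real.log δ|) ≤ falpha α x := by
  have hM : 0 ≤ δ * |Real.log δ| := mul_nonneg hδ.le (abs_nonneg _)
  unfold falpha
  split_ifs with h1 h2
  · have : (0:ℝ) ≤ x ^ (1 / α) := Real.rpow_nonneg hx0.le _
    linarith
  · rcases le_or_gt x 1 with h | h
    · have : 0 ≤ x * Real.log (1 / x) :=
        mul_nonneg hx0.le (Real.log_nonneg (one_le_one_div hx0 h))
      linarith
    · have hlx : 0 ≤ Real.log x := Real.log_nonneg h.le
      have hld : Real.log x ≤ Real.log δ := Real.log_le_log hx0 hxδ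
      have h2 : x * Real.log x ≤ δ * Real.log δ :=
        mul_le_mul hxδ hld hlx (by linarith)
      have h3 : δ * Real.log δ ≤ δ * |Real.log δ| :=
        mul_le_mul_of_nonneg_left (le_abs_self _) hδ.le
      rw [one_div, Real.log_inv]
      nlinarith
  · linarith

lemma falpha_abs_le_s14 (α x δ : ℝ) (hα : 0 < α) (hx0 : 0 < x) (hxδ : x ≤ δ) (hδ : 0 < δ) :
    |falpha α x| ≤ max 1 δ + 1 + δ * |Real.log δ| := by
  have hM : 0 ≤ δ * |Real.log δ| := mul_nonneg hδ.le (abs_nonneg _)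
  unfold falpha
  split_ifs with h1 h2
  · rw [abs_of_nonneg (Real.rpow_nonneg hx0.le _)]
    have hx1d : x ≤ max 1 δ := hxδ.trans (le_max_right _ _)
    have h1m : (1:ℝ) ≤ max 1 δ := le_max_left _ _
    calc x ^ (1 / α) ≤ (max 1 δ) ^ (1 / α) :=
          Real.rpow_le_rpow hx0.le hx1d (by positivity)
      _ ≤ (max 1 δ) ^ (1:ℝ) :=
          Real.rpow_le_rpow_of_exponent_le h1m (by rw [div_le_one hα]; linarith)
      _ = max 1 δ := Real.rpow_one _
      _ ≤ max 1 δ + 1 + δ * |Real.log δ| := by linarith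
  · rw [one_div, Real.log_inv, mul_neg, abs_neg, abs_mul, abs_of_nonneg hx0.le]
    rcases le_or_gt x 1 with h | h
    · have := (Real.abs_log_mul_self_lt x hx0 h).le
      rw [abs_mul, abs_of_nonneg hx0.le] at this
      have h1m : (0:ℝ) ≤ max 1 δ := le_trans zero_le_one (le_max_left _ _)
      rw [mul_comm]
      linarith
    · have hlx : 0 ≤ Real.log x := Real.log_nonneg h.le
      have hld : Real.log x ≤ Real.log δ := Real.log_le_log hx0 hxδ
      have h2 : x * |Real.log x| ≤ δ * |Real.log δ| := by
        rw [abs_of_nonneg hlx, abs_of_nonneg (hlx.trans hld)]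
        exact mul_le_mul hxδ hld hlx (by linarith)
      rw [mul_comm]
      have h1m : (0:ℝ) ≤ max 1 δ := le_trans zero_le_one (le_max_left _ _)
      linarith
  · rw [abs_of_nonneg hx0.le]
    have := hxδ.trans (le_max_right 1 δ)
    linarith

section Bounds
variable {Ω : Type*} [MeasurableSpace Ω] (P : Measure Ω) [IsProbabilityMeasure P]
  (D : ℝ → Ω → ℝ) (φ : ℝ → ℝ)

lemma exp_integrable (hDmeas : ∀ u : ℝ, Measurable (D u))
    (hDnonneg : ∀ u ω, 0 ≤ D u ω) (u l : ℝ) (hl : 0 ≤ l) :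
    Integrable (fun ω => Real.exp (-l * D u ω)) P := by
  refine Integrable.mono' (integrable_const (1:ℝ))
    ((Real.measurable_exp.comp ((measurable_const.mul (hDmeas u)))).aestronglyMeasurable) ?_
  filter_upwards with ω
  rw [Real.norm_eq_abs, abs_of_nonneg (Real.exp_nonneg _)]
  exact Real.exp_le_one_iff.2 (by nlinarith [hDnonneg u ω])

lemma chernoff (hDmeas : ∀ u : ℝ, Measurable (D u)) (hDnonneg : ∀ u ω, 0 ≤ D u ω)
    (hLap : ∀ u : ℝ, 0 ≤ u → ∀ l : ℝ, 0 < l →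
      ∫ ω, Real.exp (-l * D u ω) ∂P = Real.exp (-u * φ l))
    (u t : ℝ) (hu : 0 ≤ u) (ht : 0 < t) :
    (P {ω | D u ω ≤ t}).toReal ≤ Real.exp 1 * Real.exp (-u * φ (1/t)) := by
  have hl : (0:ℝ) < 1/t := by positivity
  have hset : MeasurableSet {ω | D u ω ≤ t} := measurableSet_le (hDmeas u) measurable_const
  have hIntExp := exp_integrable P D hDmeas hDnonneg u (1/t) hl.le
  have hInt : Integrable (fun ω => Real.exp 1 * Real.exp (-(1/t) * D u ω)) P :=
    hIntExp.const_mul _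
  calc (P {ω | D u ω ≤ t}).toReal
      = ∫ ω, ({ω | D u ω ≤ t}).indicator 1 ω ∂P := (integral_indicator_one hset).symm
    _ ≤ ∫ ω, Real.exp 1 * Real.exp (-(1/t) * D u ω) ∂P := by
        refine integral_mono ((integrable_const (1:ℝ)).indicator hset) hInt ?_
        intro ω
        by_cases h : D u ω ≤ t
        · rw [Set.indicator_of_mem (show ω ∈ {ω | D u ω ≤ t} from h)]
          have h1 : Real.exp (-1) ≤ Real.exp (-(1/t) * D u ω) := by
            apply Real.exp_le_exp.2
            rw [neg_mul, neg_le_neg_iff, div_mul_eq_mul_div, div_le_one ht]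
            linarith
          have := mul_le_mul_of_nonneg_left h1 (Real.exp_nonneg 1)
          rw [← Real.exp_add] at this
          simpa using this
        · rw [Set.indicator_of_notMem (show ω ∉ {ω | D u ω ≤ t} from h)]
          simp only [Pi.zero_apply]
          positivity
    _ = Real.exp 1 * Real.exp (-u * φ (1/t)) := by
        rw [integral_const_mul, hLap u hu (1/t) hl]

lemma markov (hDmeas : ∀ u : ℝ, Measurable (D u)) (hDnonneg : ∀ u ω, 0 ≤ D u ω)
    (hφpos : ∀ l : ℝ, 0 < l → 0 < φ l)
    (hLap : ∀ u : ℝ, 0 ≤ u → ∀ l : ℝ, 0 < l →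
      ∫ ω, Real.exp (-l * D u ω) ∂P = Real.exp (-u * φ l))
    (u t : ℝ) (hu : 0 ≤ u) (ht : 0 < t) :
    (P {ω | t < D u ω}).toReal ≤ u * φ (1/t) / (1 - Real.exp (-1)) := by
  have hl : (0:ℝ) < 1/t := by positivity
  have hc : 0 < 1 - Real.exp (-1) := by linarith [exp_neg_one_lt_one]
  have hset : MeasurableSet {ω | t < D u ω} := measurableSet_lt measurable_const (hDmeas u)
  have hIntExp := exp_integrable P D hDmeas hDnonneg u (1/t) hl.le
  have hInt : Integrable (fun ω => (1 - Real.exp (-(1/t) * D u ω)) / (1 - Real.exp (-1))) P :=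
    ((integrable_const (1:ℝ)).sub hIntExp).div_const _
  have key : (P {ω | t < D u ω}).toReal
      ≤ (1 - Real.exp (-u * φ (1/t))) / (1 - Real.exp (-1)) := by
    calc (P {ω | t < D u ω}).toReal
        = ∫ ω, ({ω | t < D u ω}).indicator 1 ω ∂P := (integral_indicator_one hset).symm
      _ ≤ ∫ ω, (1 - Real.exp (-(1/t) * D u ω)) / (1 - Real.exp (-1)) ∂P := by
          refine integral_mono ((integrable_const (1:ℝ)).indicator hset) hInt ?_
          intro ω
          by_cases h : t < D u ω
          · rw [Set.indicator_of_mem (show ω ∈ {ω | t < D u ω} from h)]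
            have h1 : Real.exp (-(1/t) * D u ω) ≤ Real.exp (-1) := by
              apply Real.exp_le_exp.2
              rw [neg_mul, neg_le_neg_iff, div_mul_eq_mul_div, le_div_iff₀ ht]
              linarith
            rw [Pi.one_apply, le_div_iff₀ hc]
            linarith
          · rw [Set.indicator_of_notMem (show ω ∉ {ω | t < D u ω} from h)]
            simp only [Pi.zero_apply]
            have : Real.exp (-(1/t) * D u ω) ≤ 1 :=
              Real.exp_le_one_iff.2 (by nlinarith [hDnonneg u ω])
            have := div_nonneg (by linarith : (0:ℝ) ≤ 1 - Real.exp (-(1/t) * D u ω)) hc.le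
            linarith
      _ = (1 - Real.exp (-u * φ (1/t))) / (1 - Real.exp (-1)) := by
          rw [integral_div, integral_sub (integrable_const _) hIntExp,
            hLap u hu (1/t) hl, integral_const]
          simp
  refine key.trans ?_
  have hx : 0 ≤ u * φ (1/t) := mul_nonneg hu (hφpos _ hl).le
  have h2 : 1 - Real.exp (-u * φ (1/t)) ≤ u * φ (1/t) := by
    have := Real.add_one_le_exp (-u * φ (1/t))
    nlinarith
  gcongr

end Bounds

/-- If `φ` is regularly varying at `∞` with index `β ∈ (0,1)`, then for every `α ∈ (0,2)`
and `δ > 0`, `P(E_t > δ) = o(E[fα(E_t) ; E_t ≤ δ])` as `t ↓ 0`. -/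
theorem stmt_14
    {Ω : Type*} [MeasurableSpace Ω] (P : Measure Ω) [IsProbabilityMeasure P]
    (D : ℝ → Ω → ℝ) (φ : ℝ → ℝ) (E : ℝ → Ω → ℝ)
    (hDmeas : ∀ u : ℝ, Measurable (D u))
    (hDnonneg : ∀ u ω, 0 ≤ D u ω)
    (hD0 : ∀ᵐ ω ∂P, D 0 ω = 0)
    (hDpath : ∀ᵐ ω ∂P,
      (∀ u : ℝ, 0 ≤ u → ContinuousWithinAt (fun v => D v ω) (Set.Ici u) u) ∧
      StrictMonoOn (fun u => D u ω) (Set.Ici (0 : ℝ)) ∧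
      (∀ M : ℝ, ∃ u : ℝ, 0 ≤ u ∧ M < D u ω))
    (hφpos : ∀ l : ℝ, 0 < l → 0 < φ l)
    (hφmono : StrictMonoOn φ (Set.Ioi (0 : ℝ)))
    (hφ0 : Tendsto φ (nhdsWithin 0 (Set.Ioi 0)) (nhds 0))
    (hφtop : Tendsto φ atTop atTop)
    (hLap : ∀ u : ℝ, 0 ≤ u → ∀ l : ℝ, 0 < l →
      ∫ ω, Real.exp (-l * D u ω) ∂P = Real.exp (-u * φ l))
    (hE : ∀ t ω, E t ω = sInf {u : ℝ | 0 < u ∧ t < D u ω})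
    (hEmeas : ∀ t : ℝ, Measurable (E t))
    (β : ℝ) (hβ0 : 0 < β) (hβ1 : β < 1)
    (hRV : ∀ a : ℝ, 0 < a →
      Tendsto (fun l => φ (a * l) / φ l) atTop (nhds (a ^ β)))
    (α : ℝ) (hα0 : 0 < α) (hα2 : α < 2) (δ : ℝ) (hδ : 0 < δ) :
    Tendsto
      (fun t =>
        (P {ω | δ < E t ω}).toReal /
        (∫ ω in {ω | 0 < E t ω ∧ E t ω ≤ δ}, falpha α (E t ω) ∂P))
      (nhdsWithin 0 (Set.Ioi 0)) (nhds 0) := by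
  -- setup of constants
  set δ' : ℝ := min δ (Real.exp (-1)) with hδ'def
  have hδ'0 : 0 < δ' := lt_min hδ (Real.exp_pos _)
  have hδ'δ : δ' ≤ δ := min_le_left _ _
  have hδ'e : δ' ≤ Real.exp (-1) := min_le_right _ _
  set ε : ℝ := (1 - Real.exp (-1)) / 2 with hεdef
  have hε : 0 < ε := by have := exp_neg_one_lt_one; simp only [hεdef]; linarith
  set M : ℝ := δ * |Real.log δ| with hMdef
  have hM : 0 ≤ M := mul_nonneg hδ.le (abs_nonneg _)
  set C : ℝ := max 1 δ + 1 + M with hCdef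
  -- ψ tends to infinity
  have hψtop : Tendsto (fun t : ℝ => φ (1 / t)) (nhdsWithin 0 (Set.Ioi 0)) atTop := by
    refine hφtop.comp ?_
    exact (tendsto_inv_nhdsGT_zero :
      Tendsto (fun x : ℝ => x⁻¹) (nhdsWithin 0 (Set.Ioi 0)) atTop).congr
      fun x => (one_div x).symm
  -- the comparison function g
  set g : ℝ → ℝ := fun t => (8 * Real.exp 1 / ε) * (φ (1 / t) * Real.exp (-δ * φ (1 / t)))
    with hgdef
  have hxexp : Tendsto (fun x : ℝ => x * Real.exp (-δ * x)) atTop (nhds 0) := by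
    have h2 := Real.tendsto_pow_mul_exp_neg_atTop_nhds_zero 1
    have h3 : Tendsto (fun x : ℝ => δ * x) atTop atTop :=
      Tendsto.const_mul_atTop hδ tendsto_id
    have h4 := (h2.comp h3).const_mul (1 / δ)
    rw [mul_zero] at h4
    refine h4.congr fun x => ?_
    simp only [Function.comp_apply, pow_one]
    field_simp
  have hg0 : Tendsto g (nhdsWithin 0 (Set.Ioi 0)) (nhds 0) := by
    have := (hxexp.comp hψtop).const_mul (8 * Real.exp 1 / ε)
    rw [mul_zero] at this
    exact this
  -- the eventual bounds
  have hev1 : ∀ᶠ t in nhdsWithin (0:ℝ) (Set.Ioi 0), 0 < t := self_mem_nhdsWithin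
  have hev2 : ∀ᶠ t in nhdsWithin (0:ℝ) (Set.Ioi 0), ε / δ' ≤ φ (1 / t) :=
    hψtop.eventually_ge_atTop _
  have hev3 : ∀ᶠ t in nhdsWithin (0:ℝ) (Set.Ioi 0),
      Real.exp 1 * Real.exp (-δ' * φ (1 / t)) ≤ 1 / 4 := by
    have hexp : Tendsto (fun t : ℝ => Real.exp 1 * Real.exp (-δ' * φ (1 / t)))
        (nhdsWithin 0 (Set.Ioi 0)) (nhds 0) := by
      have h1 : Tendsto (fun x : ℝ => Real.exp (-δ' * x)) atTop (nhds 0) := by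
        have := Real.tendsto_exp_atBot.comp
          (Tendsto.const_mul_atTop_of_neg (neg_neg_iff_pos.2 hδ'0) tendsto_id)
        exact this
      have := (h1.comp hψtop).const_mul (Real.exp 1)
      rw [mul_zero] at this
      exact this
    exact hexp.eventually (eventually_le_nhds (by norm_num))
  have hev4 : ∀ᶠ t in nhdsWithin (0:ℝ) (Set.Ioi 0),
      Real.exp 1 * M * (φ (1 / t) * Real.exp (-δ' * φ (1 / t))) < ε / 8 := by
    have h1 : Tendsto (fun x : ℝ => x * Real.exp (-δ' * x)) atTop (nhds 0) := by
      have h2 := Real.tendsto_pow_mul_exp_neg_atTop_nhds_zero 1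
      have h3 : Tendsto (fun x : ℝ => δ' * x) atTop atTop :=
        Tendsto.const_mul_atTop hδ'0 tendsto_id
      have h4 := (h2.comp h3).const_mul (1 / δ')
      rw [mul_zero] at h4
      refine h4.congr fun x => ?_
      simp only [Function.comp_apply, pow_one]
      field_simp
    have := (h1.comp hψtop).const_mul (Real.exp 1 * M)
    rw [mul_zero] at this
    exact this.eventually (eventually_lt_nhds (by positivity))
  -- main eventual estimate
  have hmain : ∀ᶠ t in nhdsWithin (0:ℝ) (Set.Ioi 0),
      0 ≤ (P {ω | δ < E t ω}).toReal /
          (∫ ω in {ω | 0 < E t ω ∧ E t ω ≤ δ}, falpha α (E t ω) ∂P) ∧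
      (P {ω | δ < E t ω}).toReal /
          (∫ ω in {ω | 0 < E t ω ∧ E t ω ≤ δ}, falpha α (E t ω) ∂P) ≤ g t := by
    filter_upwards [hev1, hev2, hev3, hev4] with t ht hψδ' hE3 hE4
    set ψ : ℝ := φ (1 / t) with hψdef
    have hψ0 : 0 < ψ := hφpos _ (by positivity)
    set s : ℝ := ε / ψ with hsdef
    have hs0 : 0 < s := by positivity
    have hsδ' : s ≤ δ' := (div_le_iff₀ hψ0).2 (by
      rw [div_le_iff₀ hδ'0] at hψδ'
      linarith [mul_comm δ' ψ])
    -- key pathwise facts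
    have key : ∀ᵐ ω ∂P, ∀ u : ℝ, 0 < u →
        ((D u ω ≤ t → u ≤ E t ω) ∧ (u < E t ω → D u ω ≤ t)) := by
      filter_upwards [hD0, hDpath] with ω h0 hp
      obtain ⟨hcont, hmono, hunb⟩ := hp
      intro u hu
      have hSne : {v : ℝ | 0 < v ∧ t < D v ω}.Nonempty := by
        obtain ⟨v, hv0, hvt⟩ := hunb t
        refine ⟨v, ?_, hvt⟩
        rcases hv0.eq_or_lt with h | h
        · exfalso; rw [← h, h0] at hvt; linarith
        · exact h
      have hSbdd : BddBelow {v : ℝ | 0 < v ∧ t < D v ω} := ⟨0, fun v hv => hv.1.le⟩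
      constructor
      · intro hDu
        rw [hE]
        refine le_csInf hSne fun v hv => ?_
        by_contra hlt
        push_neg at hlt
        have : D v ω ≤ D u ω := hmono.monotoneOn hv.1.le hu.le hlt.le
        linarith [hv.2]
      · intro hlt
        by_contra hDu
        push_neg at hDu
        have : E t ω ≤ u := by rw [hE]; exact csInf_le hSbdd ⟨hu, hDu⟩
        linarith
    -- numerator bound
    have hNum : (P {ω | δ < E t ω}).toReal ≤ Real.exp 1 * Real.exp (-δ * ψ) := by
      have hsub : P {ω | δ < E t ω} ≤ P {ω | D δ ω ≤ t} := by
        refine measure_mono_ae ?_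
        filter_upwards [key] with ω hk h
        exact (hk δ hδ).2 h
      have := ENNReal.toReal_mono (measure_ne_top _ _) hsub
      exact this.trans (chernoff P D φ hDmeas hDnonneg hLap δ t hδ.le ht)
    have hNum' : (P {ω | δ' < E t ω}).toReal ≤ Real.exp 1 * Real.exp (-δ' * ψ) := by
      have hsub : P {ω | δ' < E t ω} ≤ P {ω | D δ' ω ≤ t} := by
        refine measure_mono_ae ?_
        filter_upwards [key] with ω hk h
        exact (hk δ' hδ'0).2 h
      have := ENNReal.toReal_mono (measure_ne_top _ _) hsub
      exact this.trans (chernoff P D φ hDmeas hDnonneg hLap δ' t hδ'0.le ht)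
    -- sets
    set A : Set Ω := {ω | 0 < E t ω ∧ E t ω ≤ δ} with hAdef
    set B : Set Ω := {ω | s ≤ E t ω ∧ E t ω ≤ δ'} with hBdef
    set Cev : Set Ω := {ω | δ' < E t ω} with hCdef2
    have hAm : MeasurableSet A :=
      (measurableSet_lt measurable_const (hEmeas t)).inter
        (measurableSet_le (hEmeas t) measurable_const)
    have hBm : MeasurableSet B :=
      (measurableSet_le measurable_const (hEmeas t)).inter
        (measurableSet_le (hEmeas t) measurable_const)
    have hCm : MeasurableSet Cev := measurableSet_lt measurable_const (hEmeas t)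
    have hBsubA : B ⊆ A := fun ω hω => ⟨hs0.trans_le hω.1, hω.2.trans hδ'δ⟩
    -- lower bound on P B
    have hPB : 1 / 4 ≤ (P B).toReal := by
      have hDs : 1 / 2 ≤ (P {ω | D s ω ≤ t}).toReal := by
        have hcompl : {ω | D s ω ≤ t} = {ω | t < D s ω}ᶜ := by
          ext ω; simp [not_lt]
        have hmk := markov P D φ hDmeas hDnonneg hφpos hLap s t hs0.le ht
        have hsψ : s * ψ = ε := div_mul_cancel₀ ε hψ0.ne'
        have hεc : ε / (1 - Real.exp (-1)) = 1 / 2 := by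
          have hne : (1 - Real.exp (-1)) ≠ 0 := by
            have := exp_neg_one_lt_one; intro h; linarith [h]
          rw [hεdef, div_div, mul_comm (2:ℝ) (1 - Real.exp (-1)), ← div_div, div_self hne]
        rw [hsψ, hεc] at hmk
        rw [hcompl, prob_compl_eq_one_sub (measurableSet_lt measurable_const (hDmeas s)),
          ENNReal.toReal_sub_of_le prob_le_one ENNReal.one_ne_top, ENNReal.toReal_one]
        linarith
      have hsub2 : P {ω | D s ω ≤ t} ≤ P B + P Cev := by
        refine le_trans (measure_mono_ae ?_) (measure_union_le _ _)
        filter_upwards [key] with ω hk h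
        have hsE : s ≤ E t ω := (hk s hs0).1 h
        rcases le_or_gt (E t ω) δ' with h' | h'
        · exact Or.inl ⟨hsE, h'⟩
        · exact Or.inr h'
      have htr : (P {ω | D s ω ≤ t}).toReal ≤ (P B).toReal + (P Cev).toReal := by
        have h1 := ENNReal.toReal_mono (by
          exact ENNReal.add_ne_top.2 ⟨measure_ne_top _ _, measure_ne_top _ _⟩) hsub2
        rwa [ENNReal.toReal_add (measure_ne_top _ _) (measure_ne_top _ _)] at h1
      linarith
    -- pointwise lower bound on the integrand
    have hptwise : ∀ ω ∈ A,
        (B.indicator (fun _ => s) ω - Cev.indicator (fun _ => M) ω) ≤ falpha α (E t ω) := by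
      intro ω hω
      obtain ⟨hE0, hEδ⟩ := hω
      by_cases hB1 : ω ∈ B
      · have hC1 : ω ∉ Cev := fun hc => absurd hB1.2 (not_le.2 hc)
        rw [Set.indicator_of_mem hB1, Set.indicator_of_notMem hC1, sub_zero]
        have h1 := falpha_lb α (E t ω) hα0 hE0 (hB1.2.trans hδ'e)
        linarith [hB1.1]
      · rw [Set.indicator_of_notMem hB1, zero_sub]
        by_cases hC1 : ω ∈ Cev
        · rw [Set.indicator_of_mem hC1]
          exact falpha_ge_negM α (E t ω) δ hE0 hEδ hδ
        · rw [Set.indicator_of_notMem hC1, neg_zero]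
          have hEδ' : E t ω ≤ δ' := not_lt.1 hC1
          have := falpha_lb α (E t ω) hα0 hE0 (hEδ'.trans hδ'e)
          linarith
    -- integrability
    have hfmeas : Measurable (fun ω => falpha α (E t ω)) := (falpha_meas α).comp (hEmeas t)
    have hIntf : IntegrableOn (fun ω => falpha α (E t ω)) A P := by
      refine Integrable.mono' (integrable_const C) hfmeas.aestronglyMeasurable.restrict ?_
      filter_upwards [ae_restrict_mem hAm] with ω hω
      rw [Real.norm_eq_abs]
      exact falpha_abs_le_s14 α (E t ω) δ hα0 hω.1 hω.2 hδ
    have hIntg : IntegrableOn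
        (fun ω => B.indicator (fun _ => s) ω - Cev.indicator (fun _ => M) ω) A P :=
      (((integrable_const s).indicator hBm).sub
        ((integrable_const M).indicator hCm)).integrableOn
    -- denominator lower bound
    have hDen : ε / (8 * ψ) ≤ ∫ ω in A, falpha α (E t ω) ∂P := by
      have hmono2 := setIntegral_mono_on hIntg hIntf hAm hptwise
      have hcalc : ∫ ω in A, (B.indicator (fun _ => s) ω - Cev.indicator (fun _ => M) ω) ∂P
          = (P B).toReal * s - (P (A ∩ Cev)).toReal * M := by
        rw [integral_sub (((integrable_const s).indicator hBm).integrableOn)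
          (((integrable_const M).indicator hCm).integrableOn),
          setIntegral_indicator hBm, setIntegral_indicator hCm,
          setIntegral_const, setIntegral_const, Set.inter_eq_right.2 hBsubA]
        simp [smul_eq_mul]
        rfl
      have hACle : (P (A ∩ Cev)).toReal ≤ (P Cev).toReal :=
        ENNReal.toReal_mono (measure_ne_top _ _) (measure_mono Set.inter_subset_right)
      have hCev4 : (P Cev).toReal * M ≤ ε / (8 * ψ) := by
        have h1 : (P Cev).toReal ≤ Real.exp 1 * Real.exp (-δ' * ψ) := hNum'
        have h2 : Real.exp 1 * M * (ψ * Real.exp (-δ' * ψ)) < ε / 8 := hE4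
        have h3 : (P Cev).toReal * M ≤ Real.exp 1 * Real.exp (-δ' * ψ) * M :=
          mul_le_mul_of_nonneg_right h1 hM
        have h5 : Real.exp 1 * Real.exp (-δ' * ψ) * M * ψ < ε / 8 := by
          rw [show Real.exp 1 * Real.exp (-δ' * ψ) * M * ψ
            = Real.exp 1 * M * (ψ * Real.exp (-δ' * ψ)) from by ring]
          exact h2
        have h6 : Real.exp 1 * Real.exp (-δ' * ψ) * M < ε / (8 * ψ) := by
          rw [div_mul_eq_div_div]
          exact (lt_div_iff₀ hψ0).2 h5
        linarith
      have hPBs : ε / (4 * ψ) ≤ (P B).toReal * s := by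
        have : ε / (4 * ψ) = (1/4) * s := by rw [hsdef]; ring
        rw [this]
        exact mul_le_mul_of_nonneg_right hPB hs0.le
      have hεψ : ε / (8 * ψ) ≤ ε / (4 * ψ) - ε / (8 * ψ) := by
        have h48 : ε / (4 * ψ) = 2 * (ε / (8 * ψ)) := by
          rw [div_mul_eq_div_div, div_mul_eq_div_div]
          ring
        rw [h48]
        linarith [div_nonneg hε.le (by positivity : (0:ℝ) ≤ 8 * ψ)]
      calc ε / (8 * ψ) ≤ ε / (4 * ψ) - ε / (8 * ψ) := hεψ
        _ ≤ (P B).toReal * s - (P (A ∩ Cev)).toReal * M := by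
            have h5 : (P (A ∩ Cev)).toReal * M ≤ (P Cev).toReal * M :=
              mul_le_mul_of_nonneg_right hACle hM
            linarith
        _ = ∫ ω in A, (B.indicator (fun _ => s) ω - Cev.indicator (fun _ => M) ω) ∂P :=
            hcalc.symm
        _ ≤ ∫ ω in A, falpha α (E t ω) ∂P := hmono2
    -- conclude
    have hDenpos : 0 < ∫ ω in A, falpha α (E t ω) ∂P :=
      lt_of_lt_of_le (by positivity) hDen
    constructor
    · exact div_nonneg ENNReal.toReal_nonneg hDenpos.le
    · have hstep : (P {ω | δ < E t ω}).toReal / (∫ ω in A, falpha α (E t ω) ∂P)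
          ≤ (Real.exp 1 * Real.exp (-δ * ψ)) / (ε / (8 * ψ)) :=
        div_le_div₀ (by positivity) hNum (by positivity) hDen
      refine hstep.trans ?_
      rw [hgdef]
      have : (Real.exp 1 * Real.exp (-δ * ψ)) / (ε / (8 * ψ))
          = (8 * Real.exp 1 / ε) * (ψ * Real.exp (-δ * ψ)) := by
        field_simp
      rw [this]
  exact tendsto_of_tendsto_of_tendsto_of_le_of_le' tendsto_const_nhds hg0
    (hmain.mono fun t h => h.1) (hmain.mono fun t h => h.2)
end
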